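/- arXiv:1702.03150 — 14 statements merged into one kernel-verified Lean document; each statement's English description precedes it below -/
import Mathlib

section
/- Let G be a finite group, H ⊆ K subgroups of G, and g ∈ K. Then Pr_g(H,Aut(K)) = (1/(|H|·|Aut(K)|)) · Σ_{x ∈ H, xg ∈ orb_K(x)} |C_{Aut(K)}(x)|, and also Pr_g(H,Aut(K)) = (1/|H|) · Σ_{x ∈ H, xg ∈ orb_K(x)} 1/|orb_K(x)|. -/
open scoped Pointwise Classical

section AutoCommuting

variable {G : Type*} [Group G]

/-- The set of pairs `(x, α) ∈ H × Aut(K)` whose autocommutator `[x,α] = x⁻¹ α(x)` equals `g`. -/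
def autPairs (H K : Subgroup G) (hHK : H ≤ K) (g : G) : Set (↥H × MulAut ↥K) :=
  {p | ((p.1 : G))⁻¹ * ((p.2 ⟨(p.1 : G), hHK p.1.2⟩ : ↥K) : G) = g}

/-- The generalized autocommuting probability `Pr_g(H, Aut(K))`. -/
noncomputable def prAut (H K : Subgroup G) (hHK : H ≤ K) (g : G) : ℚ :=
  (Nat.card (autPairs H K hHK g) : ℚ) /
    ((Nat.card ↥H : ℚ) * (Nat.card (MulAut ↥K) : ℚ))

/-- The orbit `orb_K(x)` of `x ∈ K` under the natural action of `Aut(K)` on `K`. -/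
def orbK (K : Subgroup G) (x : ↥K) : Set ↥K := MulAction.orbit (MulAut ↥K) x

/-- `C_{Aut(K)}(x)`, the set of automorphisms of `K` fixing `x`. -/
def centAut (K : Subgroup G) (x : ↥K) : Set (MulAut ↥K) := {α | α x = x}

/-- `C_{Aut(K)}(H)`, the set of automorphisms of `K` fixing every element of `H`. -/
def centAutH (H K : Subgroup G) (hHK : H ≤ K) : Set (MulAut ↥K) :=
  {α | ∀ x : ↥H, α ⟨(x : G), hHK x.2⟩ = ⟨(x : G), hHK x.2⟩}

/-- `L(H, Aut(K)) = {x ∈ H : [x,α] = 1 for all α ∈ Aut(K)}`, as a subgroup of `H`. -/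
def absCent (H K : Subgroup G) (hHK : H ≤ K) : Subgroup ↥H where
  carrier := {x | ∀ α : MulAut ↥K, α ⟨(x : G), hHK x.2⟩ = ⟨(x : G), hHK x.2⟩}
  one_mem' := by
    intro α
    have h1 : (⟨((1 : ↥H) : G), hHK (1 : ↥H).2⟩ : ↥K) = 1 := rfl
    rw [h1, map_one]
  mul_mem' := by
    intro a b ha hb α
    have h1 : (⟨((a * b : ↥H) : G), hHK (a * b).2⟩ : ↥K)
        = ⟨(a : G), hHK a.2⟩ * ⟨(b : G), hHK b.2⟩ := rfl
    rw [h1, map_mul, ha α, hb α]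
  inv_mem' := by
    intro a ha α
    have h1 : (⟨((a⁻¹ : ↥H) : G), hHK (a⁻¹).2⟩ : ↥K) = (⟨(a : G), hHK a.2⟩ : ↥K)⁻¹ := rfl
    rw [h1, map_inv, ha α]

theorem mem_absCent {H K : Subgroup G} {hHK : H ≤ K} {x : ↥H} :
    x ∈ absCent H K hHK ↔ ∀ α : MulAut ↥K, α ⟨(x : G), hHK x.2⟩ = ⟨(x : G), hHK x.2⟩ :=
  Iff.rfl

/-- `S(H, Aut(K)) = {[x,α] : x ∈ H, α ∈ Aut(K)}`, as a subset of `K`. -/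
def autCommSet (H K : Subgroup G) (hHK : H ≤ K) : Set ↥K :=
  {k | ∃ x : ↥H, ∃ α : MulAut ↥K,
    (⟨(x : G), hHK x.2⟩ : ↥K)⁻¹ * α ⟨(x : G), hHK x.2⟩ = k}

end AutoCommuting

lemma aux_card_smul_eq {M X : Type*} [Group M] [MulAction M X] {a k : X}
    (h : k ∈ MulAction.orbit M a) :
    Nat.card {α : M // α • a = k} = Nat.card (MulAction.stabilizer M a) := by
  obtain ⟨β, hβ⟩ := h
  have hβ' : β • a = k := hβ
  refine Nat.card_congr (Equiv.subtypeEquiv (Equiv.mulLeft β⁻¹) fun α => ?_)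
  rw [Equiv.coe_mulLeft, MulAction.mem_stabilizer_iff, mul_smul, inv_smul_eq_iff, hβ']

lemma aux_os {M X : Type*} [Group M] [MulAction M X] (a : X) :
    Nat.card M = Nat.card (MulAction.orbit M a) * Nat.card (MulAction.stabilizer M a) := by
  rw [Subgroup.card_eq_card_quotient_mul_card_subgroup (MulAction.stabilizer M a)]
  congr 1
  exact (Nat.card_congr (MulAction.orbitEquivQuotientStabilizer M a)).symm

set_option maxHeartbeats 1000000 in
/-- Computing formulae for the generalized autocommuting probability `Pr_g(H, Aut(K))`. -/
theorem stmt_2 {G : Type*} [Group G] [Fintype G] (H K : Subgroup G) (hHK : H ≤ K)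
    (g : G) (hg : g ∈ K) :
    prAut H K hHK g =
      (1 / ((Nat.card ↥H : ℚ) * (Nat.card (MulAut ↥K) : ℚ))) *
        ∑ x : ↥H,
          (if (⟨(x : G) * g, mul_mem (hHK x.2) hg⟩ : ↥K) ∈ orbK K ⟨(x : G), hHK x.2⟩
            then (Nat.card (centAut K ⟨(x : G), hHK x.2⟩) : ℚ) else 0) ∧
    prAut H K hHK g =
      (1 / (Nat.card ↥H : ℚ)) *
        ∑ x : ↥H,
          (if (⟨(x : G) * g, mul_mem (hHK x.2) hg⟩ : ↥K) ∈ orbK K ⟨(x : G), hHK x.2⟩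
            then 1 / (Nat.card (orbK K ⟨(x : G), hHK x.2⟩) : ℚ) else 0) := by
  classical
  haveI : Finite (MulAut ↥K) := DFunLike.finite _
  haveI : Fintype (MulAut ↥K) := Fintype.ofFinite _
  have hstab : ∀ a : ↥K,
      Nat.card (MulAction.stabilizer (MulAut ↥K) a) = Nat.card (centAut K a) :=
    fun a => Nat.card_congr (Equiv.subtypeEquivRight fun α => Iff.rfl)
  have hnat : Nat.card (autPairs H K hHK g) =
      ∑ x : ↥H, (if (⟨(x : G) * g, mul_mem (hHK x.2) hg⟩ : ↥K) ∈ orbK K ⟨(x : G), hHK x.2⟩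
        then Nat.card (centAut K ⟨(x : G), hHK x.2⟩) else 0) := by
    have e1 : autPairs H K hHK g ≃
        Σ x : ↥H, {α : MulAut ↥K //
          α • (⟨(x : G), hHK x.2⟩ : ↥K) = ⟨(x : G) * g, mul_mem (hHK x.2) hg⟩} := by
      refine Equiv.trans (Equiv.subtypeEquivRight fun p => ?_)
        (Equiv.subtypeProdEquivSigmaSubtype
          (fun (x : ↥H) (α : MulAut ↥K) =>
            α • (⟨(x : G), hHK x.2⟩ : ↥K) = ⟨(x : G) * g, mul_mem (hHK x.2) hg⟩))
      show ((p.1 : G))⁻¹ * ((p.2 ⟨(p.1 : G), hHK p.1.2⟩ : ↥K) : G) = g ↔ _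
      rw [inv_mul_eq_iff_eq_mul]
      exact ⟨fun h => Subtype.ext h, fun h => congrArg Subtype.val h⟩
    rw [Nat.card_congr e1, Nat.card_eq_fintype_card, Fintype.card_sigma]
    refine Finset.sum_congr rfl fun x _ => ?_
    rw [← Nat.card_eq_fintype_card]
    by_cases h : (⟨(x : G) * g, mul_mem (hHK x.2) hg⟩ : ↥K) ∈ orbK K ⟨(x : G), hHK x.2⟩
    · rw [if_pos h, aux_card_smul_eq h, hstab]
    · rw [if_neg h]
      haveI : IsEmpty {α : MulAut ↥K //
          α • (⟨(x : G), hHK x.2⟩ : ↥K) = ⟨(x : G) * g, mul_mem (hHK x.2) hg⟩} :=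
        ⟨fun p => h ⟨p.1, p.2⟩⟩
      exact Nat.card_of_isEmpty
  have h1 : prAut H K hHK g =
      (1 / ((Nat.card ↥H : ℚ) * (Nat.card (MulAut ↥K) : ℚ))) *
        ∑ x : ↥H,
          (if (⟨(x : G) * g, mul_mem (hHK x.2) hg⟩ : ↥K) ∈ orbK K ⟨(x : G), hHK x.2⟩
            then (Nat.card (centAut K ⟨(x : G), hHK x.2⟩) : ℚ) else 0) := by
    rw [prAut, hnat, Nat.cast_sum, one_div, inv_mul_eq_div]
    simp only [Nat.cast_ite, Nat.cast_zero]
  refine ⟨h1, h1.trans ?_⟩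
  rw [Finset.mul_sum, Finset.mul_sum]
  refine Finset.sum_congr rfl fun x _ => ?_
  by_cases h : (⟨(x : G) * g, mul_mem (hHK x.2) hg⟩ : ↥K) ∈ orbK K ⟨(x : G), hHK x.2⟩
  · rw [if_pos h, if_pos h]
    have hos : (Nat.card (MulAut ↥K) : ℚ) =
        (Nat.card (orbK K ⟨(x : G), hHK x.2⟩) : ℚ) *
          (Nat.card (centAut K ⟨(x : G), hHK x.2⟩) : ℚ) := by
      rw [← hstab]
      exact_mod_cast congrArg Nat.cast (aux_os (M := MulAut ↥K) (⟨(x : G), hHK x.2⟩ : ↥K))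
    haveI : Nonempty (orbK K ⟨(x : G), hHK x.2⟩) :=
      ⟨⟨_, MulAction.mem_orbit_self _⟩⟩
    haveI : Nonempty (centAut K ⟨(x : G), hHK x.2⟩) := ⟨⟨1, rfl⟩⟩
    have hH : (0 : ℚ) < (Nat.card ↥H : ℚ) := by exact_mod_cast Nat.card_pos
    have ho : (0 : ℚ) < (Nat.card (orbK K ⟨(x : G), hHK x.2⟩) : ℚ) := by
      exact_mod_cast Nat.card_pos
    have hc : (0 : ℚ) < (Nat.card (centAut K ⟨(x : G), hHK x.2⟩) : ℚ) := by
      exact_mod_cast Nat.card_pos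
    rw [hos]
    have key : ∀ a b c : ℚ, 0 < a → 0 < b → 0 < c →
        1 / (a * (b * c)) * c = 1 / a * (1 / b) := by
      intro a b c ha hb hc
      field_simp
    exact key _ _ _ hH ho hc
  · rw [if_neg h, if_neg h, mul_zero, mul_zero]
end

section
/- Let G be a finite group and H ⊆ K subgroups of G. If C_{Aut(K)}(x) = {id} for every x ∈ H with x ≠ 1, then Pr(H,Aut(K)) = 1/|H| + 1/|Aut(K)| − 1/(|H|·|Aut(K)|). -/
open scoped Pointwise Classical

/-- If `C_{Aut(K)}(x) = {id}` for every non-identity `x ∈ H`, then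
`Pr(H,Aut(K)) = 1/|H| + 1/|Aut(K)| - 1/(|H||Aut(K)|)`. -/
theorem stmt_4 {G : Type*} [Group G] [Fintype G] (H K : Subgroup G) (hHK : H ≤ K)
    (hcent : ∀ x : ↥H, (x : G) ≠ 1 → centAut K ⟨(x : G), hHK x.2⟩ = {1}) :
    prAut H K hHK 1 =
      1 / (Nat.card ↥H : ℚ) + 1 / (Nat.card (MulAut ↥K) : ℚ) -
        1 / ((Nat.card ↥H : ℚ) * (Nat.card (MulAut ↥K) : ℚ)) := by
  have hKey : autPairs H K hHK 1 =
      ({1} ×ˢ (Set.univ : Set (MulAut ↥K))) ∪ ((Set.univ : Set ↥H) ×ˢ {1}) := by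
    ext ⟨x, α⟩
    simp only [autPairs, Set.mem_setOf_eq, Set.mem_union, Set.mem_prod, Set.mem_singleton_iff,
      Set.mem_univ, and_true, true_and]
    constructor
    · intro h
      have hfix : α ⟨(x : G), hHK x.2⟩ = ⟨(x : G), hHK x.2⟩ := by
        exact Subtype.ext (inv_mul_eq_one.mp h).symm
      by_cases hx : (x : G) = 1
      · left; exact Subtype.ext hx
      · right
        have := hcent x hx
        have hα : α ∈ centAut K ⟨(x : G), hHK x.2⟩ := hfix
        rw [this] at hα
        exact hα
    · rintro (rfl | rfl)
      · have h1 : (⟨((1 : ↥H) : G), hHK (1 : ↥H).2⟩ : ↥K) = 1 := rfl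
        simp [h1]
      · simp
  have hH : Nat.card (({1} ×ˢ (Set.univ : Set (MulAut ↥K))) : Set (↥H × MulAut ↥K))
      = Nat.card (MulAut ↥K) := by
    rw [Nat.card_coe_set_eq, Set.singleton_prod,
      Set.ncard_image_of_injective _ (fun a b h => congrArg Prod.snd h), Set.ncard_univ]
  have hA : Nat.card (((Set.univ : Set ↥H) ×ˢ ({1} : Set (MulAut ↥K))) : Set (↥H × MulAut ↥K))
      = Nat.card ↥H := by
    rw [Nat.card_coe_set_eq, Set.prod_singleton,
      Set.ncard_image_of_injective _ (fun a b h => congrArg Prod.fst h), Set.ncard_univ]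
  have hInter : (({1} ×ˢ (Set.univ : Set (MulAut ↥K))) ∩
      ((Set.univ : Set ↥H) ×ˢ ({1} : Set (MulAut ↥K)))) = {(1, 1)} := by
    ext ⟨x, α⟩
    simp [Set.mem_prod, Prod.ext_iff, and_comm, eq_comm]
  have hcard : Nat.card (autPairs H K hHK 1)
      = Nat.card (MulAut ↥K) + Nat.card ↥H - 1 := by
    rw [hKey, Nat.card_coe_set_eq]
    have h2 := Set.ncard_union_add_ncard_inter ({1} ×ˢ (Set.univ : Set (MulAut ↥K)))
      ((Set.univ : Set ↥H) ×ˢ ({1} : Set (MulAut ↥K)))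
    rw [hInter, Set.ncard_singleton] at h2
    rw [Nat.card_coe_set_eq] at hH hA
    rw [hH, hA] at h2
    omega
  have hHpos : 0 < Nat.card ↥H := Nat.card_pos
  have hApos : 0 < Nat.card (MulAut ↥K) := Nat.card_pos
  rw [prAut, hcard]
  have h1 : (Nat.card ↥H : ℚ) ≠ 0 := by exact_mod_cast hHpos.ne'
  have h2 : (Nat.card (MulAut ↥K) : ℚ) ≠ 0 := by exact_mod_cast hApos.ne'
  have : ((Nat.card (MulAut ↥K) + Nat.card ↥H - 1 : ℕ) : ℚ)
      = (Nat.card (MulAut ↥K) : ℚ) + (Nat.card ↥H : ℚ) - 1 := by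
    push_cast [Nat.cast_sub (by omega : 1 ≤ Nat.card (MulAut ↥K) + Nat.card ↥H)]
    ring
  rw [this]
  field_simp
end

section
/- Let G be a finite group, H ⊆ K subgroups of G, and g ∈ K. Then Pr_{g⁻¹}(H,Aut(K)) = Pr_g(H,Aut(K)). -/
open scoped Pointwise Classical

section Flip

variable {G : Type*} [Group G]

/-- The involution `(x, α) ↦ (x⁻¹, conj(x⁻¹) ∘ α)` on `H × Aut(K)`. -/
def flipPair (H K : Subgroup G) (hHK : H ≤ K) (p : ↥H × MulAut ↥K) : ↥H × MulAut ↥K :=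
  (p.1⁻¹, MulAut.conj (⟨(p.1 : G), hHK p.1.2⟩ : ↥K)⁻¹ * p.2)

lemma flipPair_mem (H K : Subgroup G) (hHK : H ≤ K) (g : G) (p : ↥H × MulAut ↥K)
    (hp : p ∈ autPairs H K hHK g) : flipPair H K hHK p ∈ autPairs H K hHK g⁻¹ := by
  obtain ⟨x, α⟩ := p
  set k : ↥K := ⟨(x : G), hHK x.2⟩ with hk
  have hmem : (⟨((x⁻¹ : ↥H) : G), hHK (x⁻¹).2⟩ : ↥K) = k⁻¹ := rfl
  simp only [autPairs, Set.mem_setOf_eq] at hp ⊢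
  simp only [flipPair, hmem]
  have : (MulAut.conj k⁻¹ * α) k⁻¹ = k⁻¹ * (α k)⁻¹ * k := by
    simp [MulAut.conj_apply, mul_assoc]
  rw [this]
  push_cast
  rw [← hp]
  have hkx : (k : G) = (x : G) := rfl
  simp [hkx, mul_assoc]
  exact hk

lemma flipPair_invol (H K : Subgroup G) (hHK : H ≤ K) (p : ↥H × MulAut ↥K) :
    flipPair H K hHK (flipPair H K hHK p) = p := by
  obtain ⟨x, α⟩ := p
  simp only [flipPair]
  refine Prod.ext (by simp) ?_
  have hmem : (⟨(((x : ↥H)⁻¹ : ↥H) : G), hHK (x⁻¹).2⟩ : ↥K)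
      = (⟨(x : G), hHK x.2⟩ : ↥K)⁻¹ := rfl
  rw [hmem]
  rw [← mul_assoc, ← map_mul]
  simp

/-- The flip gives an equivalence `autPairs g ≃ autPairs g⁻¹`. -/
def flipEquiv (H K : Subgroup G) (hHK : H ≤ K) (g : G) :
    autPairs H K hHK g ≃ autPairs H K hHK g⁻¹ where
  toFun p := ⟨flipPair H K hHK p, flipPair_mem H K hHK g p p.2⟩
  invFun p := ⟨flipPair H K hHK p, by
    have := flipPair_mem H K hHK g⁻¹ p p.2
    rwa [inv_inv] at this⟩
  left_inv p := Subtype.ext (flipPair_invol H K hHK p)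
  right_inv p := Subtype.ext (flipPair_invol H K hHK p)

end Flip

/-- `Pr_{g⁻¹}(H, Aut(K)) = Pr_g(H, Aut(K))`. -/
theorem stmt_5 {G : Type*} [Group G] [Fintype G] (H K : Subgroup G) (hHK : H ≤ K)
    (g : G) (hg : g ∈ K) :
    prAut H K hHK g⁻¹ = prAut H K hHK g := by
  unfold prAut
  rw [Nat.card_congr (flipEquiv H K hHK g)]
end

section
/- Let G₁ and G₂ be finite groups, H₁ ⊆ K₁ subgroups of G₁ and H₂ ⊆ K₂ subgroups of G₂ with gcd(|K₁|,|K₂|) = 1. Then for every (g₁,g₂) ∈ K₁ × K₂, Pr_{(g₁,g₂)}(H₁ × H₂, Aut(K₁ × K₂)) = Pr_{g₁}(H₁,Aut(K₁)) · Pr_{g₂}(H₂,Aut(K₂)), where H₁ × H₂ and K₁ × K₂ are the product subgroups of G₁ × G₂. -/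
open scoped Pointwise Classical

set_option linter.unusedSectionVars false

section CoprimeAut

variable {A B : Type*} [Group A] [Group B] [Finite A] [Finite B]

lemma aux_snd_eq_one (h : Nat.Coprime (Nat.card A) (Nat.card B))
    (α : MulAut (A × B)) (a : A) : (α (a, 1)).2 = 1 := by
  have h1 : orderOf (α (a, 1)) = orderOf ((a, 1) : A × B) :=
    orderOf_injective α.toMonoidHom α.injective _
  have h2 : orderOf ((α (a, 1)).2) ∣ Nat.card A := by
    have := orderOf_snd_dvd_orderOf (x := α (a, 1))
    rw [h1, Prod.orderOf_mk, orderOf_one, Nat.lcm_one_right] at this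
    exact this.trans (orderOf_dvd_natCard a)
  have h3 : orderOf ((α (a, 1)).2) ∣ Nat.card B := orderOf_dvd_natCard _
  exact orderOf_eq_one_iff.mp (Nat.dvd_one.mp (h ▸ Nat.dvd_gcd h2 h3))

lemma aux_fst_eq_one (h : Nat.Coprime (Nat.card A) (Nat.card B))
    (α : MulAut (A × B)) (b : B) : (α (1, b)).1 = 1 := by
  have h1 : orderOf (α (1, b)) = orderOf ((1, b) : A × B) :=
    orderOf_injective α.toMonoidHom α.injective _
  have h2 : orderOf ((α (1, b)).1) ∣ Nat.card B := by
    have := orderOf_fst_dvd_orderOf (x := α (1, b))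
    rw [h1, Prod.orderOf_mk, orderOf_one, Nat.lcm_one_left] at this
    exact this.trans (orderOf_dvd_natCard b)
  have h3 : orderOf ((α (1, b)).1) ∣ Nat.card A := orderOf_dvd_natCard _
  exact orderOf_eq_one_iff.mp (Nat.dvd_one.mp (h ▸ Nat.dvd_gcd h3 h2))

lemma aux_apply_fst_one (h : Nat.Coprime (Nat.card A) (Nat.card B))
    (α : MulAut (A × B)) (a : A) : α (a, 1) = ((α (a, 1)).1, 1) :=
  Prod.ext rfl (aux_snd_eq_one h α a)

lemma aux_apply_snd_one (h : Nat.Coprime (Nat.card A) (Nat.card B))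
    (α : MulAut (A × B)) (b : B) : α (1, b) = (1, (α (1, b)).2) :=
  Prod.ext (aux_fst_eq_one h α b) rfl

/-- The first-component automorphism induced by an automorphism of a coprime product. -/
def autFst (h : Nat.Coprime (Nat.card A) (Nat.card B)) (α : MulAut (A × B)) : MulAut A where
  toFun a := (α (a, 1)).1
  invFun a := (α⁻¹ (a, 1)).1
  left_inv a := by
    show (α⁻¹ (((α (a, 1)).1 : A), (1 : B))).1 = a
    rw [← aux_apply_fst_one h α a]
    show (α.symm (α (a, 1))).1 = a
    rw [α.symm_apply_apply]
  right_inv a := by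
    show (α (((α⁻¹ (a, 1)).1 : A), (1 : B))).1 = a
    rw [← aux_apply_fst_one h α⁻¹ a]
    show (α (α.symm (a, 1))).1 = a
    rw [α.apply_symm_apply]
  map_mul' a b := by
    show (α ((a * b : A), (1 : B))).1 = (α (a, 1)).1 * (α (b, 1)).1
    rw [show ((a * b : A), (1 : B)) = (a, 1) * (b, 1) by simp, map_mul]
    rfl

/-- The second-component automorphism induced by an automorphism of a coprime product. -/
def autSnd (h : Nat.Coprime (Nat.card A) (Nat.card B)) (α : MulAut (A × B)) : MulAut B where
  toFun b := (α (1, b)).2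
  invFun b := (α⁻¹ (1, b)).2
  left_inv b := by
    show (α⁻¹ ((1 : A), ((α (1, b)).2 : B))).2 = b
    rw [← aux_apply_snd_one h α b]
    show (α.symm (α (1, b))).2 = b
    rw [α.symm_apply_apply]
  right_inv b := by
    show (α ((1 : A), ((α⁻¹ (1, b)).2 : B))).2 = b
    rw [← aux_apply_snd_one h α⁻¹ b]
    show (α (α.symm (1, b))).2 = b
    rw [α.apply_symm_apply]
  map_mul' a b := by
    show (α ((1 : A), (a * b : B))).2 = (α (1, a)).2 * (α (1, b)).2
    rw [show ((1 : A), (a * b : B)) = (1, a) * (1, b) by simp, map_mul]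
    rfl

lemma aut_apply_eq (h : Nat.Coprime (Nat.card A) (Nat.card B)) (α : MulAut (A × B))
    (x : A × B) : α x = (autFst h α x.1, autSnd h α x.2) := by
  obtain ⟨a, b⟩ := x
  have : ((a, b) : A × B) = (a, 1) * (1, b) := by simp
  rw [this, map_mul, aux_apply_fst_one h α a, aux_apply_snd_one h α b]
  simp [autFst, autSnd]

/-- Splitting of the automorphism group of a coprime product. -/
noncomputable def mulAutProdEquiv (h : Nat.Coprime (Nat.card A) (Nat.card B)) :
    MulAut (A × B) ≃ MulAut A × MulAut B where
  toFun α := (autFst h α, autSnd h α)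
  invFun p := MulEquiv.prodCongr p.1 p.2
  left_inv α := by
    apply MulEquiv.ext
    intro x
    rw [aut_apply_eq h α x]
    rfl
  right_inv p := by
    refine Prod.ext (MulEquiv.ext fun a => ?_) (MulEquiv.ext fun b => ?_)
    · show (MulEquiv.prodCongr p.1 p.2 (a, 1)).1 = p.1 a
      simp [MulEquiv.prodCongr]
    · show (MulEquiv.prodCongr p.1 p.2 (1, b)).2 = p.2 b
      simp [MulEquiv.prodCongr]

end CoprimeAut

/-- Transporting automorphism groups along a group isomorphism. -/
def conjAutEquiv {M N : Type*} [Group M] [Group N] (e : M ≃* N) : MulAut M ≃ MulAut N where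
  toFun α := (e.symm.trans α).trans e
  invFun β := (e.trans β).trans e.symm
  left_inv α := MulEquiv.ext fun x => by simp
  right_inv β := MulEquiv.ext fun x => by simp

section TwoGroups

variable {G₁ G₂ : Type*} [Group G₁] [Group G₂]

/-- Explicit isomorphism between a product subgroup and the product of the subgroups. -/
def sgProdEquiv (K₁ : Subgroup G₁) (K₂ : Subgroup G₂) : ↥(K₁.prod K₂) ≃* ↥K₁ × ↥K₂ where
  toFun x := (⟨(x : G₁ × G₂).1, x.2.1⟩, ⟨(x : G₁ × G₂).2, x.2.2⟩)
  invFun p := ⟨((p.1 : G₁), (p.2 : G₂)), ⟨p.1.2, p.2.2⟩⟩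
  left_inv x := rfl
  right_inv p := rfl
  map_mul' x y := rfl

/-- Splitting of the automorphism group of a coprime product subgroup. -/
noncomputable def autProdSplit (K₁ : Subgroup G₁) (K₂ : Subgroup G₂)
    [Finite ↥K₁] [Finite ↥K₂]
    (hcop : Nat.Coprime (Nat.card ↥K₁) (Nat.card ↥K₂)) :
    MulAut ↥(K₁.prod K₂) ≃ MulAut ↥K₁ × MulAut ↥K₂ :=
  (conjAutEquiv (sgProdEquiv K₁ K₂)).trans (mulAutProdEquiv hcop)

lemma autProdSplit_apply_val (K₁ : Subgroup G₁) (K₂ : Subgroup G₂)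
    [Finite ↥K₁] [Finite ↥K₂]
    (hcop : Nat.Coprime (Nat.card ↥K₁) (Nat.card ↥K₂))
    (α : MulAut ↥(K₁.prod K₂)) (k : ↥(K₁.prod K₂))
    (h1 : (k : G₁ × G₂).1 ∈ K₁) (h2 : (k : G₁ × G₂).2 ∈ K₂) :
    ((α k : ↥(K₁.prod K₂)) : G₁ × G₂) =
      ((((autProdSplit K₁ K₂ hcop α).1 ⟨(k : G₁ × G₂).1, h1⟩ : ↥K₁) : G₁),
       (((autProdSplit K₁ K₂ hcop α).2 ⟨(k : G₁ × G₂).2, h2⟩ : ↥K₂) : G₂)) := by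
  set e := sgProdEquiv K₁ K₂ with he
  set β := conjAutEquiv e α with hβ
  have h4 : α k = e.symm (β (e k)) := rfl
  have h3 := aut_apply_eq hcop β (e k)
  rw [h4, h3]
  rfl

end TwoGroups

/-- Multiplicativity of the generalized autocommuting probability for coprime direct factors. -/
theorem stmt_6 {G₁ G₂ : Type*} [Group G₁] [Group G₂] [Fintype G₁] [Fintype G₂]
    (H₁ K₁ : Subgroup G₁) (H₂ K₂ : Subgroup G₂)
    (hHK₁ : H₁ ≤ K₁) (hHK₂ : H₂ ≤ K₂)
    (hcop : Nat.Coprime (Nat.card ↥K₁) (Nat.card ↥K₂))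
    (g₁ : G₁) (g₂ : G₂) (hg₁ : g₁ ∈ K₁) (hg₂ : g₂ ∈ K₂) :
    prAut (H₁.prod H₂) (K₁.prod K₂) (Subgroup.prod_mono hHK₁ hHK₂) (g₁, g₂) =
      prAut H₁ K₁ hHK₁ g₁ * prAut H₂ K₂ hHK₂ g₂ := by
  classical
  set hP := Subgroup.prod_mono hHK₁ hHK₂
  set Φ := autProdSplit K₁ K₂ hcop with hΦ
  -- the big equivalence
  set E : (↥(H₁.prod H₂) × MulAut ↥(K₁.prod K₂)) ≃
      ((↥H₁ × MulAut ↥K₁) × (↥H₂ × MulAut ↥K₂)) :=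
    ((sgProdEquiv H₁ H₂).toEquiv.prodCongr Φ).trans (Equiv.prodProdProdComm _ _ _ _) with hE
  have key : ∀ p : ↥(H₁.prod H₂) × MulAut ↥(K₁.prod K₂),
      p ∈ autPairs (H₁.prod H₂) (K₁.prod K₂) hP (g₁, g₂) ↔
      ((E p).1 ∈ autPairs H₁ K₁ hHK₁ g₁ ∧ (E p).2 ∈ autPairs H₂ K₂ hHK₂ g₂) := by
    rintro ⟨x, α⟩
    have hx1 : (x : G₁ × G₂).1 ∈ H₁ := x.2.1
    have hx2 : (x : G₁ × G₂).2 ∈ H₂ := x.2.2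
    have hv := autProdSplit_apply_val K₁ K₂ hcop α ⟨(x : G₁ × G₂), hP x.2⟩
      (hHK₁ hx1) (hHK₂ hx2)
    show ((x : G₁ × G₂))⁻¹ * ((α ⟨(x : G₁ × G₂), hP x.2⟩ : ↥(K₁.prod K₂)) : G₁ × G₂)
        = (g₁, g₂) ↔ _
    rw [hv]
    constructor
    · intro hcond
      constructor
      · exact congrArg Prod.fst hcond
      · exact congrArg Prod.snd hcond
    · rintro ⟨hc1, hc2⟩
      exact Prod.ext hc1 hc2
  have hcard : Nat.card (autPairs (H₁.prod H₂) (K₁.prod K₂) hP (g₁, g₂)) =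
      Nat.card (autPairs H₁ K₁ hHK₁ g₁) * Nat.card (autPairs H₂ K₂ hHK₂ g₂) := by
    have e1 : autPairs (H₁.prod H₂) (K₁.prod K₂) hP (g₁, g₂) ≃
        {q : (↥H₁ × MulAut ↥K₁) × (↥H₂ × MulAut ↥K₂) //
          q.1 ∈ autPairs H₁ K₁ hHK₁ g₁ ∧ q.2 ∈ autPairs H₂ K₂ hHK₂ g₂} :=
      Equiv.subtypeEquiv E key
    have e2 : {q : (↥H₁ × MulAut ↥K₁) × (↥H₂ × MulAut ↥K₂) //
          q.1 ∈ autPairs H₁ K₁ hHK₁ g₁ ∧ q.2 ∈ autPairs H₂ K₂ hHK₂ g₂} ≃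
        (autPairs H₁ K₁ hHK₁ g₁ × autPairs H₂ K₂ hHK₂ g₂) :=
      Equiv.subtypeProdEquivProd
    rw [Nat.card_congr (e1.trans e2), Nat.card_prod]
  have hH : (Nat.card ↥(H₁.prod H₂) : ℚ) = (Nat.card ↥H₁ : ℚ) * (Nat.card ↥H₂ : ℚ) := by
    rw [← Nat.cast_mul, ← Nat.card_prod]
    exact congrArg _ (Nat.card_congr (sgProdEquiv H₁ H₂).toEquiv)
  have hA : (Nat.card (MulAut ↥(K₁.prod K₂)) : ℚ) =
      (Nat.card (MulAut ↥K₁) : ℚ) * (Nat.card (MulAut ↥K₂) : ℚ) := by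
    rw [← Nat.cast_mul, ← Nat.card_prod]
    exact congrArg _ (Nat.card_congr Φ)
  unfold prAut
  rw [hcard, hH, hA, Nat.cast_mul]
  rw [div_mul_div_comm]
  congr 1
  ring
end

section
/- Let G be a finite group and H ⊆ K subgroups of G. Then Pr(H,Aut(K)) ≥ |L(H,Aut(K))|/|H| + |C_{Aut(K)}(H)|·(|H| − |L(H,Aut(K))|)/(|H|·|Aut(K)|). -/
open scoped Pointwise Classical

/-- Lower bound for `Pr(H, Aut(K))` in terms of `L(H,Aut(K))` and `C_{Aut(K)}(H)`. -/
theorem stmt_7 {G : Type*} [Group G] [Fintype G] (H K : Subgroup G) (hHK : H ≤ K) :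
    prAut H K hHK 1 ≥
      (Nat.card (absCent H K hHK) : ℚ) / (Nat.card ↥H : ℚ) +
        (Nat.card (centAutH H K hHK) : ℚ) *
            ((Nat.card ↥H : ℚ) - (Nat.card (absCent H K hHK) : ℚ)) /
          ((Nat.card ↥H : ℚ) * (Nat.card (MulAut ↥K) : ℚ)) := by
  classical
  haveI : Finite (MulAut ↥K) :=
    Finite.of_injective (fun α => (α : ↥K → ↥K)) DFunLike.coe_injective
  let L := absCent H K hHK
  let C := centAutH H K hHK
  let f : (↥L × MulAut ↥K) ⊕ (↥((L : Set ↥H)ᶜ) × ↥C) → ↥(autPairs H K hHK 1) :=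
    fun p => match p with
    | Sum.inl (x, α) => ⟨(x.1, α), by
        show ((x.1 : G))⁻¹ * ((α ⟨(x.1 : G), hHK x.1.2⟩ : ↥K) : G) = 1
        have := congrArg Subtype.val (x.2 α)
        rw [this]
        exact inv_mul_cancel _⟩
    | Sum.inr (x, α) => ⟨(x.1, α.1), by
        show ((x.1 : G))⁻¹ * ((α.1 ⟨(x.1 : G), hHK x.1.2⟩ : ↥K) : G) = 1
        have hα : ∀ y : ↥H, α.1 ⟨(y : G), hHK y.2⟩ = ⟨(y : G), hHK y.2⟩ := α.2
        have := congrArg Subtype.val (hα x.1)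
        rw [this]
        exact inv_mul_cancel _⟩
  have hf : Function.Injective f := by
    rintro (⟨x, α⟩ | ⟨x, α⟩) (⟨y, β⟩ | ⟨y, β⟩) h
    · simp only [f, Subtype.mk.injEq, Prod.mk.injEq] at h
      obtain ⟨h1, h2⟩ := h
      simp [Subtype.ext h1, h2]
    · exfalso
      simp only [f, Subtype.mk.injEq, Prod.mk.injEq] at h
      exact y.2 (h.1 ▸ x.2)
    · exfalso
      simp only [f, Subtype.mk.injEq, Prod.mk.injEq] at h
      exact x.2 (h.1.symm ▸ y.2)
    · simp only [f, Subtype.mk.injEq, Prod.mk.injEq] at h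
      obtain ⟨h1, h2⟩ := h
      simp [Subtype.ext h1, Subtype.ext h2]
  have hcard : Nat.card ((↥L × MulAut ↥K) ⊕ (↥((L : Set ↥H)ᶜ) × ↥C)) ≤
      Nat.card (autPairs H K hHK 1) := Nat.card_le_card_of_injective f hf
  rw [Nat.card_sum, Nat.card_prod, Nat.card_prod] at hcard
  have hcompl : Nat.card ↥(L : Set ↥H) + Nat.card ↥((L : Set ↥H)ᶜ) = Nat.card ↥H := by
    rw [Nat.card_coe_set_eq, Nat.card_coe_set_eq,
      Set.ncard_add_ncard_compl]
  have hLL : Nat.card ↥(L : Set ↥H) = Nat.card L := rfl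
  rw [hLL] at hcompl
  have hHpos : (0 : ℚ) < (Nat.card ↥H : ℚ) := by exact_mod_cast Nat.card_pos
  have hApos : (0 : ℚ) < (Nat.card (MulAut ↥K) : ℚ) := by exact_mod_cast Nat.card_pos
  have key : (Nat.card L : ℚ) * Nat.card (MulAut ↥K) +
      Nat.card ↥((L : Set ↥H)ᶜ) * Nat.card C ≤
      Nat.card (autPairs H K hHK 1) := by exact_mod_cast hcard
  have hml : (Nat.card L : ℚ) + (Nat.card ↥((L : Set ↥H)ᶜ) : ℚ) = (Nat.card ↥H : ℚ) := by
    exact_mod_cast hcompl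
  rw [ge_iff_le, prAut]
  have step1 : (Nat.card L : ℚ) / (Nat.card ↥H : ℚ) +
      (Nat.card C : ℚ) * ((Nat.card ↥H : ℚ) - (Nat.card L : ℚ)) /
        ((Nat.card ↥H : ℚ) * (Nat.card (MulAut ↥K) : ℚ)) =
      ((Nat.card L : ℚ) * Nat.card (MulAut ↥K) + Nat.card ↥((L : Set ↥H)ᶜ) * Nat.card C) /
        ((Nat.card ↥H : ℚ) * (Nat.card (MulAut ↥K) : ℚ)) := by
    have hm : ((Nat.card ↥H : ℚ) - (Nat.card L : ℚ)) = (Nat.card ↥((L : Set ↥H)ᶜ) : ℚ) := by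
      linarith
    rw [hm]
    field_simp
  rw [show (Nat.card (absCent H K hHK) : ℚ) = (Nat.card L : ℚ) from rfl,
    show (Nat.card (centAutH H K hHK) : ℚ) = (Nat.card C : ℚ) from rfl, step1]
  gcongr
end

section
/- Let G be a finite group, H ⊆ K subgroups of G, and g ∈ K with g ≠ 1 and g ∈ S(H,Aut(K)). Then Pr_g(H,Aut(K)) ≥ |L(H,Aut(K))|·|C_{Aut(K)}(H)|/(|H|·|Aut(K)|). -/
open scoped Pointwise Classical

/-- Lower bound for `Pr_g(H, Aut(K))` when `g ≠ 1` and `g ∈ S(H,Aut(K))`. -/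
theorem stmt_8 {G : Type*} [Group G] [Fintype G] (H K : Subgroup G) (hHK : H ≤ K)
    (g : G) (hg : g ∈ K) (hg1 : g ≠ 1)
    (hgS : (⟨g, hg⟩ : ↥K) ∈ autCommSet H K hHK) :
    prAut H K hHK g ≥
      (Nat.card (absCent H K hHK) : ℚ) * (Nat.card (centAutH H K hHK) : ℚ) /
        ((Nat.card ↥H : ℚ) * (Nat.card (MulAut ↥K) : ℚ)) := by
  obtain ⟨x₀, α₀, hx⟩ := hgS
  have hxG : (x₀ : G)⁻¹ * ((α₀ ⟨(x₀ : G), hHK x₀.2⟩ : ↥K) : G) = g := by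
    have := congrArg (Subtype.val) hx
    simpa using this
  classical
  set f : (absCent H K hHK) × (centAutH H K hHK) → (autPairs H K hHK g) := fun p =>
    ⟨(p.1.1 * x₀, α₀ * p.2.1), by
      obtain ⟨⟨a, ha⟩, ⟨β, hβ⟩⟩ := p
      simp only [autPairs, Set.mem_setOf_eq, MulAut.mul_apply]
      have h1 : (⟨((a * x₀ : ↥H) : G), hHK (a * x₀).2⟩ : ↥K)
          = (⟨(a : G), hHK a.2⟩ : ↥K) * ⟨(x₀ : G), hHK x₀.2⟩ := rfl
      rw [h1, map_mul, hβ a, hβ x₀, map_mul, ha α₀]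
      push_cast
      rw [mul_inv_rev]
      rw [mul_assoc, ← mul_assoc (a : G)⁻¹, inv_mul_cancel, one_mul, hxG]⟩ with hfdef
  have hinj : Function.Injective f := by
    rintro ⟨⟨a, ha⟩, ⟨β, hβ⟩⟩ ⟨⟨a', ha'⟩, ⟨β', hβ'⟩⟩ h
    simp only [hfdef, Subtype.mk.injEq, Prod.mk.injEq] at h
    obtain ⟨h1, h2⟩ := h
    have e1 := mul_right_cancel h1
    have e2 := mul_left_cancel h2
    simp [e1, e2]
  have hcard : Nat.card (absCent H K hHK) * Nat.card (centAutH H K hHK)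
      ≤ Nat.card (autPairs H K hHK g) := by
    rw [← Nat.card_prod]
    exact Nat.card_le_card_of_injective f hinj
  have hH : (0 : ℚ) < (Nat.card ↥H : ℚ) := by
    exact_mod_cast Nat.card_pos
  have hA : (0 : ℚ) < (Nat.card (MulAut ↥K) : ℚ) := by
    exact_mod_cast Nat.card_pos
  rw [ge_iff_le, prAut]
  gcongr
  exact_mod_cast hcard
end

section
/- Let G be a finite group, H ⊆ K subgroups of G, and g ∈ K. Then Pr_g(H,Aut(K)) ≤ Pr(H,Aut(K)), with equality if and only if g = 1. -/
open scoped Pointwise Classical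

private lemma autPairs_card_aux {G : Type*} [Group G] [Fintype G] (H K : Subgroup G)
    (hHK : H ≤ K) (g : G) (hg : g ≠ 1) :
    Nat.card (autPairs H K hHK g) < Nat.card (autPairs H K hHK 1) := by
  classical
  -- base point for each automorphism
  set b : MulAut ↥K → ↥H := fun α =>
    if h : ∃ x : ↥H, (x, α) ∈ autPairs H K hHK g then h.choose else 1 with hb
  have hbspec : ∀ α : MulAut ↥K, ∀ x : ↥H, (x, α) ∈ autPairs H K hHK g →
      (b α, α) ∈ autPairs H K hHK g := by
    intro α x hx
    have h : ∃ x : ↥H, (x, α) ∈ autPairs H K hHK g := ⟨x, hx⟩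
    simp only [hb, dif_pos h]
    exact h.choose_spec
  -- the injection into the ambient product
  set F : ↥(autPairs H K hHK g) → ↥H × MulAut ↥K :=
    fun p => (p.1.1 * (b p.1.2)⁻¹, p.1.2) with hF
  have hFinj : Function.Injective F := by
    intro p q hpq
    have h2 : (F p).2 = (F q).2 := congrArg Prod.snd hpq
    have h1 : (F p).1 = (F q).1 := congrArg Prod.fst hpq
    simp only [hF] at h1 h2
    rw [h2] at h1
    have h3 : (p : ↥H × MulAut ↥K).1 = (q : ↥H × MulAut ↥K).1 := mul_right_cancel h1
    exact Subtype.ext (Prod.ext h3 h2)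
  have hFrange : Set.range F ⊆ autPairs H K hHK 1 := by
    rintro _ ⟨⟨⟨x, α⟩, hp⟩, rfl⟩
    have hx : ((x : G))⁻¹ * ((α ⟨(x : G), hHK x.2⟩ : ↥K) : G) = g := hp
    have hbα := hbspec α x hp
    have hbx : (((b α) : G))⁻¹ * ((α ⟨((b α) : G), hHK (b α).2⟩ : ↥K) : G) = g := hbα
    -- work in K
    set u : ↥K := ⟨(x : G), hHK x.2⟩ with hu
    set v : ↥K := ⟨((b α) : G), hHK (b α).2⟩ with hv
    show (((x * (b α)⁻¹ : ↥H) : G))⁻¹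
        * ((α ⟨((x * (b α)⁻¹ : ↥H) : G), hHK (x * (b α)⁻¹).2⟩ : ↥K) : G) = 1
    have key : (⟨((x * (b α)⁻¹ : ↥H) : G), hHK (x * (b α)⁻¹).2⟩ : ↥K) = u * v⁻¹ := rfl
    rw [key, map_mul, map_inv]
    have hαu : ((α u : ↥K) : G) = (u : G) * g := by
      have huc : (u : G) = (x : G) := rfl
      rw [huc, ← hx]; group
    have hαv : ((α v : ↥K) : G) = (v : G) * g := by
      have hvc : (v : G) = ((b α) : G) := rfl
      rw [hvc, ← hbx]; group
    push_cast
    rw [hαu, hαv]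
    have huc' : (u : G) = (x : G) := rfl
    have hvc' : (v : G) = ((b α) : G) := rfl
    rw [huc', hvc']
    group
  -- (1, 1) is in autPairs 1 but not in the range of F
  have h1mem : ((1 : ↥H), (1 : MulAut ↥K)) ∈ autPairs H K hHK 1 := by
    show (((1 : ↥H) : G))⁻¹ * (((1 : MulAut ↥K) ⟨((1 : ↥H) : G), hHK (1 : ↥H).2⟩ : ↥K) : G) = 1
    have : (⟨((1 : ↥H) : G), hHK (1 : ↥H).2⟩ : ↥K) = 1 := rfl
    rw [this]
    simp
  have h1not : ((1 : ↥H), (1 : MulAut ↥K)) ∉ Set.range F := by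
    rintro ⟨⟨⟨x, α⟩, hp⟩, heq⟩
    have hα : α = 1 := congrArg Prod.snd heq
    have hx : ((x : G))⁻¹ * ((α ⟨(x : G), hHK x.2⟩ : ↥K) : G) = g := hp
    rw [hα] at hx
    simp at hx
    exact hg hx.symm
  have hss : Set.range F ⊂ autPairs H K hHK 1 :=
    ⟨hFrange, fun h => h1not (h h1mem)⟩
  calc Nat.card (autPairs H K hHK g) = Nat.card (Set.range F) :=
        (Nat.card_range_of_injective hFinj).symm
    _ = (Set.range F).ncard := Nat.card_coe_set_eq _
    _ < (autPairs H K hHK 1 : Set (↥H × MulAut ↥K)).ncard :=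
        Set.ncard_lt_ncard hss (Set.toFinite _)
    _ = Nat.card (autPairs H K hHK 1) := (Nat.card_coe_set_eq _).symm

/-- `Pr_g(H,Aut(K)) ≤ Pr(H,Aut(K))`, with equality if and only if `g = 1`. -/
theorem stmt_9 {G : Type*} [Group G] [Fintype G] (H K : Subgroup G) (hHK : H ≤ K)
    (g : G) (hg : g ∈ K) :
    prAut H K hHK g ≤ prAut H K hHK 1 ∧
      (prAut H K hHK g = prAut H K hHK 1 ↔ g = 1) := by
  classical
  by_cases hg1 : g = 1
  · subst hg1; exact ⟨le_refl _, by simp⟩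
  · have hlt := autPairs_card_aux H K hHK g hg1
    have hD : (0 : ℚ) < (Nat.card ↥H : ℚ) * (Nat.card (MulAut ↥K) : ℚ) := by
      have h1 : 0 < Nat.card ↥H := Nat.card_pos
      have h2 : 0 < Nat.card (MulAut ↥K) := Nat.card_pos
      positivity
    have hltQ : ((Nat.card (autPairs H K hHK g)) : ℚ)
        < ((Nat.card (autPairs H K hHK 1)) : ℚ) := by exact_mod_cast hlt
    have hlt' : prAut H K hHK g < prAut H K hHK 1 := by
      unfold prAut
      exact div_lt_div_of_pos_right hltQ hD
    refine ⟨le_of_lt hlt', ⟨fun h => absurd h (ne_of_lt hlt'), fun h => absurd h hg1⟩⟩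
end

section
/- Let G be a finite group, H ⊆ K subgroups of G with H ≠ L(H,Aut(K)), let p be the smallest prime dividing |Aut(K)|, and let g ∈ K with g ≠ 1 and g ∈ S(H,Aut(K)). Then Pr_g(H,Aut(K)) ≤ (|H| − |L(H,Aut(K))|)/(p·|H|) < 1/p. -/
open scoped Pointwise Classical

lemma autPairs_aux_bound {G : Type*} [Group G] [Fintype G] (H K : Subgroup G) (hHK : H ≤ K)
    (p : ℕ) (hpmin : ∀ r : ℕ, r.Prime → r ∣ Nat.card (MulAut ↥K) → p ≤ r)
    (g : G) (x : ↥H)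
    (hx : ¬ ∀ α : MulAut ↥K, α ⟨(x : G), hHK x.2⟩ = ⟨(x : G), hHK x.2⟩) :
    p * Nat.card {α : MulAut ↥K // ((x : G))⁻¹ * ((α ⟨(x : G), hHK x.2⟩ : ↥K) : G) = g}
      ≤ Nat.card (MulAut ↥K) := by
  set xK : ↥K := ⟨(x : G), hHK x.2⟩ with hxK
  set S := MulAction.stabilizer (MulAut ↥K) xK with hS
  have hfiber : Nat.card {α : MulAut ↥K // ((x : G))⁻¹ * ((α xK : ↥K) : G) = g}
      ≤ Nat.card S := by
    rcases isEmpty_or_nonempty {α : MulAut ↥K // ((x : G))⁻¹ * ((α xK : ↥K) : G) = g}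
      with h | ⟨⟨α₀, h₀⟩⟩
    · simp [Nat.card_of_isEmpty]
    · have hmap : ∀ q : {α : MulAut ↥K // ((x : G))⁻¹ * ((α xK : ↥K) : G) = g},
          α₀⁻¹ * q.1 ∈ S := by
        rintro ⟨α, hα⟩
        have hcoe : ((α xK : ↥K) : G) = ((α₀ xK : ↥K) : G) := by
          have h' : ((x : G))⁻¹ * ((α xK : ↥K) : G) = ((x : G))⁻¹ * ((α₀ xK : ↥K) : G) :=
            hα.trans h₀.symm
          exact mul_left_cancel h'
        have heq : α xK = α₀ xK := Subtype.ext hcoe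
        show (α₀⁻¹ * α) • xK = xK
        have : (α₀⁻¹ * α) • xK = α₀⁻¹ (α xK) := rfl
        rw [this, heq]
        exact α₀.left_inv xK
      have hinj : Function.Injective
          (fun q : {α : MulAut ↥K // ((x : G))⁻¹ * ((α xK : ↥K) : G) = g} =>
            (⟨α₀⁻¹ * q.1, hmap q⟩ : S)) := by
        rintro ⟨a, ha⟩ ⟨b, hb⟩ hab
        have : α₀⁻¹ * a = α₀⁻¹ * b := congrArg Subtype.val hab
        exact Subtype.ext (mul_left_cancel this)
      exact Nat.card_le_card_of_injective _ hinj
  have hSne : S ≠ ⊤ := by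
    intro htop
    apply hx
    intro α
    have : α ∈ S := htop ▸ Subgroup.mem_top α
    exact this
  have h1 : 1 < S.index := Subgroup.one_lt_index_of_ne_top hSne
  have hsdvd : S.index ∣ Nat.card (MulAut ↥K) := Subgroup.index_dvd_card S
  have hr : p ≤ S.index := by
    have hrp : (S.index.minFac).Prime := Nat.minFac_prime (by omega)
    have := hpmin _ hrp ((Nat.minFac_dvd _).trans hsdvd)
    exact this.trans (Nat.minFac_le (by omega))
  calc p * Nat.card {α : MulAut ↥K // ((x : G))⁻¹ * ((α xK : ↥K) : G) = g}
      ≤ S.index * Nat.card S := Nat.mul_le_mul hr hfiber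
    _ = Nat.card (MulAut ↥K) := by rw [mul_comm, Subgroup.card_mul_index]


/-- Upper bound for `Pr_g(H,Aut(K))` for `g ≠ 1` in terms of the smallest prime `p`
dividing `|Aut(K)|`. -/
theorem stmt_10 {G : Type*} [Group G] [Fintype G] (H K : Subgroup G) (hHK : H ≤ K)
    (hne : absCent H K hHK ≠ ⊤)
    (p : ℕ) (hp : p.Prime) (hpdvd : p ∣ Nat.card (MulAut ↥K))
    (hpmin : ∀ r : ℕ, r.Prime → r ∣ Nat.card (MulAut ↥K) → p ≤ r)
    (g : G) (hg : g ∈ K) (hg1 : g ≠ 1)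
    (hgS : (⟨g, hg⟩ : ↥K) ∈ autCommSet H K hHK) :
    prAut H K hHK g ≤
        ((Nat.card ↥H : ℚ) - (Nat.card (absCent H K hHK) : ℚ)) /
          ((p : ℚ) * (Nat.card ↥H : ℚ)) ∧
      ((Nat.card ↥H : ℚ) - (Nat.card (absCent H K hHK) : ℚ)) /
          ((p : ℚ) * (Nat.card ↥H : ℚ)) < 1 / (p : ℚ) := by
  classical
  haveI : Fintype (MulAut ↥K) := Fintype.ofFinite _
  set L := absCent H K hHK with hLdef
  set cH := Nat.card ↥H with hcH
  set cL := Nat.card ↥L with hcL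
  set cA := Nat.card (MulAut ↥K) with hcA
  -- fiber counting function
  set f : ↥H → ℕ := fun x =>
    Nat.card {α : MulAut ↥K // ((x : G))⁻¹ * ((α ⟨(x : G), hHK x.2⟩ : ↥K) : G) = g}
    with hf
  -- the number of pairs equals the sum of fibers
  have hsum : Nat.card (autPairs H K hHK g) = ∑ x : ↥H, f x := by
    have e : ↥(autPairs H K hHK g) ≃
        Σ x : ↥H, {α : MulAut ↥K // ((x : G))⁻¹ * ((α ⟨(x : G), hHK x.2⟩ : ↥K) : G) = g} :=
      Equiv.subtypeProdEquivSigmaSubtype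
        (fun (x : ↥H) (α : MulAut ↥K) => ((x : G))⁻¹ * ((α ⟨(x : G), hHK x.2⟩ : ↥K) : G) = g)
    rw [Nat.card_congr e, Nat.card_eq_fintype_card, Fintype.card_sigma]
    exact Finset.sum_congr rfl fun x _ => (Nat.card_eq_fintype_card).symm
  -- fibers over elements of L are empty
  have hzero : ∀ x : ↥H, x ∈ L → f x = 0 := by
    intro x hx
    have : IsEmpty {α : MulAut ↥K //
        ((x : G))⁻¹ * ((α ⟨(x : G), hHK x.2⟩ : ↥K) : G) = g} := by
      refine ⟨fun q => ?_⟩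
      obtain ⟨α, hα⟩ := q
      rw [hx α] at hα
      simp only [inv_mul_cancel] at hα
      exact hg1 hα.symm
    exact Nat.card_of_isEmpty
  -- main counting bound
  have hcount : p * Nat.card (autPairs H K hHK g) ≤ (cH - cL) * cA := by
    rw [hsum, Finset.mul_sum]
    calc ∑ x : ↥H, p * f x
        ≤ ∑ x : ↥H, (if x ∈ L then 0 else cA) := by
          refine Finset.sum_le_sum fun x _ => ?_
          by_cases hx : x ∈ L
          · simp [hx, hzero x hx]
          · simp only [hx, if_false]
            exact autPairs_aux_bound H K hHK p hpmin g x hx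
      _ = (cH - cL) * cA := by
          rw [Finset.sum_ite, Finset.sum_const_zero, Finset.sum_const, zero_add, smul_eq_mul]
          congr 1
          have h1 : (Finset.univ.filter (fun x : ↥H => x ∈ L)).card = cL := by
            rw [hcL, Nat.card_eq_fintype_card, Fintype.card_subtype]
          have h2 : (Finset.univ.filter (fun x : ↥H => x ∈ L)).card
              + (Finset.univ.filter (fun x : ↥H => ¬ x ∈ L)).card = cH := by
            rw [Finset.card_filter_add_card_filter_not, hcH,
              Nat.card_eq_fintype_card, Finset.card_univ]
          omega
  -- positivity facts
  have hcHpos : 0 < cH := Nat.card_pos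
  have hcApos : 0 < cA := Nat.card_pos
  have hcLpos : 0 < cL := Nat.card_pos
  have hcLle : cL ≤ cH := by
    exact Nat.card_le_card_of_injective (fun x : ↥L => (x : ↥H)) Subtype.val_injective
  have hppos : (0 : ℚ) < p := by exact_mod_cast hp.pos
  -- cast the counting bound to ℚ
  have hcountQ : (p : ℚ) * (Nat.card (autPairs H K hHK g) : ℚ) ≤ ((cH : ℚ) - cL) * cA := by
    have := hcount
    have hcast : ((cH - cL : ℕ) : ℚ) = (cH : ℚ) - cL := by
      rw [Nat.cast_sub hcLle]
    calc (p : ℚ) * (Nat.card (autPairs H K hHK g) : ℚ)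
        = ((p * Nat.card (autPairs H K hHK g) : ℕ) : ℚ) := by push_cast; ring
      _ ≤ (((cH - cL) * cA : ℕ) : ℚ) := by exact_mod_cast this
      _ = ((cH : ℚ) - cL) * cA := by rw [Nat.cast_mul, hcast]
  constructor
  · rw [prAut, div_le_div_iff₀ (by positivity) (by positivity)]
    have hcHQ : (0 : ℚ) ≤ cH := by positivity
    nlinarith [mul_le_mul_of_nonneg_right hcountQ hcHQ]
  · rw [div_lt_div_iff₀ (by positivity) hppos]
    have : (1 : ℚ) ≤ cL := by exact_mod_cast hcLpos
    nlinarith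
end

section
/- Let G be a finite group, H₁ ⊆ H₂ ⊆ K subgroups of G, and g ∈ K. Then Pr_g(H₁,Aut(K)) ≤ [H₂ : H₁] · Pr_g(H₂,Aut(K)), with equality if and only if xg ∉ orb_K(x) for every x ∈ H₂ \ H₁. -/
open scoped Pointwise Classical

/-- `Pr_g(H₁,Aut(K)) ≤ [H₂:H₁] Pr_g(H₂,Aut(K))`, with equality iff `xg ∉ orb_K(x)`
for every `x ∈ H₂ \ H₁`. -/
theorem stmt_11 {G : Type*} [Group G] [Fintype G] (H₁ H₂ K : Subgroup G)
    (h₁₂ : H₁ ≤ H₂) (h₂K : H₂ ≤ K) (g : G) (hg : g ∈ K) :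
    prAut H₁ K (h₁₂.trans h₂K) g ≤ (H₁.relIndex H₂ : ℚ) * prAut H₂ K h₂K g ∧
      (prAut H₁ K (h₁₂.trans h₂K) g = (H₁.relIndex H₂ : ℚ) * prAut H₂ K h₂K g ↔
        ∀ x : G, (hx : x ∈ H₂) → x ∉ H₁ →
          (⟨x * g, mul_mem (h₂K hx) hg⟩ : ↥K) ∉ orbK K ⟨x, h₂K hx⟩) := by
  classical
  have hK : H₁ ≤ K := h₁₂.trans h₂K
  haveI : Finite (MulAut ↥K) :=
    Finite.of_injective (fun α => (α : ↥K → ↥K)) DFunLike.coe_injective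
  -- the injection between the two pair sets
  let f : autPairs H₁ K hK g → autPairs H₂ K h₂K g :=
    fun p => ⟨(⟨(p.1.1 : G), h₁₂ p.1.1.2⟩, p.1.2), p.2⟩
  have hfinj : Function.Injective f := by
    rintro ⟨⟨x, α⟩, hp⟩ ⟨⟨y, β⟩, hq⟩ h
    have h' := congrArg Subtype.val h
    simp only [f, Prod.mk.injEq, Subtype.mk.injEq] at h'
    exact Subtype.ext (Prod.ext (Subtype.ext h'.1) h'.2)
  -- cardinality facts
  have ha : 0 < (Nat.card (MulAut ↥K) : ℚ) := by exact_mod_cast Nat.card_pos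
  have hh1 : 0 < (Nat.card ↥H₁ : ℚ) := by exact_mod_cast Nat.card_pos
  have hh2 : 0 < (Nat.card ↥H₂ : ℚ) := by exact_mod_cast Nat.card_pos
  have hcard : (Nat.card ↥H₂ : ℚ) = (H₁.relIndex H₂ : ℚ) * (Nat.card ↥H₁ : ℚ) := by
    have h := Subgroup.card_mul_index (H₁.subgroupOf H₂)
    have he : Nat.card ↥(H₁.subgroupOf H₂) = Nat.card ↥H₁ :=
      Nat.card_congr (Subgroup.subgroupOfEquivOfLe h₁₂).toEquiv
    rw [he] at h
    rw [Subgroup.relIndex]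
    push_cast [← h]
    ring
  have hr : (H₁.relIndex H₂ : ℚ) ≠ 0 := by
    intro h0
    rw [h0, zero_mul] at hcard
    exact hh2.ne' hcard
  -- rewrite RHS with common denominator
  have hrw : (H₁.relIndex H₂ : ℚ) * prAut H₂ K h₂K g =
      (Nat.card (autPairs H₂ K h₂K g) : ℚ) /
        ((Nat.card ↥H₁ : ℚ) * (Nat.card (MulAut ↥K) : ℚ)) := by
    unfold prAut
    rw [hcard]
    field_simp
  have hden : (0:ℚ) < (Nat.card ↥H₁ : ℚ) * (Nat.card (MulAut ↥K) : ℚ) :=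
    mul_pos hh1 ha
  have hle : Nat.card (autPairs H₁ K hK g) ≤ Nat.card (autPairs H₂ K h₂K g) :=
    Nat.card_le_card_of_injective f hfinj
  -- membership characterization
  have hmem : ∀ (x : G) (hx : x ∈ H₂) (α : MulAut ↥K),
      ((⟨x, hx⟩, α) ∈ autPairs H₂ K h₂K g) ↔
        α ⟨x, h₂K hx⟩ = ⟨x * g, mul_mem (h₂K hx) hg⟩ := by
    intro x hx α
    constructor
    · intro hp
      apply Subtype.ext
      have hp' : x⁻¹ * ((α ⟨x, h₂K hx⟩ : ↥K) : G) = g := hp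
      have : ((α ⟨x, h₂K hx⟩ : ↥K) : G) = x * g := by
        rw [← hp']; group
      exact this
    · intro hα
      have : ((α ⟨x, h₂K hx⟩ : ↥K) : G) = x * g := congrArg Subtype.val hα
      show x⁻¹ * ((α ⟨x, h₂K hx⟩ : ↥K) : G) = g
      rw [this]; group
  -- surjectivity of f ↔ orbit condition
  have hsurj_iff : Function.Surjective f ↔
      ∀ x : G, (hx : x ∈ H₂) → x ∉ H₁ →
        (⟨x * g, mul_mem (h₂K hx) hg⟩ : ↥K) ∉ orbK K ⟨x, h₂K hx⟩ := by
    constructor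
    · intro hs x hx hx1 horb
      obtain ⟨α, hα⟩ := MulAction.mem_orbit_iff.mp horb
      have hα' : α ⟨x, h₂K hx⟩ = ⟨x * g, mul_mem (h₂K hx) hg⟩ := hα
      have hq : (⟨x, hx⟩, α) ∈ autPairs H₂ K h₂K g := (hmem x hx α).mpr hα'
      obtain ⟨p, hp⟩ := hs ⟨(⟨x, hx⟩, α), hq⟩
      have h' := congrArg (fun q => ((q : (↥H₂ × MulAut ↥K)).1 : G)) (congrArg Subtype.val hp)
      have hx1' : (p.1.1 : G) = x := h'
      exact hx1 (hx1' ▸ p.1.1.2)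
    · rintro hcond ⟨⟨y, α⟩, hq⟩
      have hy1 : (y : G) ∈ H₁ := by
        by_contra hy1
        apply hcond (y : G) y.2 hy1
        have hα : α ⟨(y : G), h₂K y.2⟩ = ⟨(y : G) * g, mul_mem (h₂K y.2) hg⟩ := by
          have := (hmem (y : G) y.2 α).mp (by exact hq)
          exact this
        exact MulAction.mem_orbit_iff.mpr ⟨α, hα⟩
      refine ⟨⟨(⟨(y : G), hy1⟩, α), hq⟩, ?_⟩
      apply Subtype.ext
      exact Prod.ext (Subtype.ext rfl) rfl
  constructor
  · rw [show prAut H₁ K (h₁₂.trans h₂K) g = prAut H₁ K hK g from rfl, hrw]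
    unfold prAut
    gcongr
  · rw [show prAut H₁ K (h₁₂.trans h₂K) g = prAut H₁ K hK g from rfl, hrw]
    unfold prAut
    rw [div_eq_div_iff hden.ne' hden.ne', (mul_left_injective₀ hden.ne').eq_iff, Nat.cast_inj]
    rw [← hsurj_iff]
    exact ⟨fun h => ((Nat.bijective_iff_injective_and_card f).mpr ⟨hfinj, h⟩).2,
      fun h => Nat.card_eq_of_bijective f ⟨hfinj, h⟩⟩
end

section
/- Let G be a finite group, H ⊆ K subgroups of G, and g ∈ K. Then Pr_g(H,Aut(K)) ≤ [K : H] · Pr(K,Aut(K)), with equality if and only if g = 1 and H = K. -/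
open scoped Pointwise Classical

/-- `Pr_g(H,Aut(K)) ≤ [K:H] Pr(K,Aut(K))`, with equality iff `g = 1` and `H = K`. -/
theorem stmt_12 {G : Type*} [Group G] [Fintype G] (H K : Subgroup G) (hHK : H ≤ K)
    (g : G) (hg : g ∈ K) :
    prAut H K hHK g ≤ (H.relIndex K : ℚ) * prAut K K le_rfl 1 ∧
      (prAut H K hHK g = (H.relIndex K : ℚ) * prAut K K le_rfl 1 ↔ g = 1 ∧ H = K) := by
  classical
  -- backward direction of the card equality, proved first (before introducing lets)
  have hback : g = 1 → H = K →
      Nat.card ↥(autPairs H K hHK g) = Nat.card ↥(autPairs K K le_rfl 1) := by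
    intro h1 h2
    subst h1; subst h2
    rfl
  set ghat : ↥K := ⟨g, hg⟩ with hghat
  let e : ↥H → ↥K := fun x => ⟨(x : G), hHK x.2⟩
  have einj : Function.Injective e := fun a b hab =>
    Subtype.ext (congrArg (Subtype.val : ↥K → G) hab)
  have memH : ∀ p : ↥H × MulAut ↥K,
      p ∈ autPairs H K hHK g ↔ p.2 (e p.1) = e p.1 * ghat := by
    intro p
    simp only [autPairs, Set.mem_setOf_eq]
    rw [inv_mul_eq_iff_eq_mul]
    constructor
    · intro h; exact Subtype.ext h
    · intro h; exact congrArg Subtype.val h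
  have memK : ∀ q : ↥K × MulAut ↥K,
      q ∈ autPairs K K le_rfl (1 : G) ↔ q.2 q.1 = q.1 := by
    intro q
    simp only [autPairs, Set.mem_setOf_eq]
    rw [inv_mul_eq_one]
    constructor
    · intro h; exact (Subtype.ext h).symm
    · intro h; exact (congrArg Subtype.val h).symm
  let asel : ↥H → MulAut ↥K := fun x =>
    if h : ∃ α : MulAut ↥K, α (e x) = e x * ghat then h.choose else 1
  have asel_spec : ∀ x : ↥H, (∃ α : MulAut ↥K, α (e x) = e x * ghat) →
      (asel x) (e x) = e x * ghat := by
    intro x h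
    simp only [asel, dif_pos h]
    exact h.choose_spec
  let f : ↥(autPairs H K hHK g) → ↥(autPairs K K le_rfl (1 : G)) := fun p =>
    ⟨(e p.1.1, (asel p.1.1)⁻¹ * p.1.2), by
      refine (memK _).mpr ?_
      have hα : p.1.2 (e p.1.1) = e p.1.1 * ghat := (memH p.1).mp p.2
      have hs := asel_spec p.1.1 ⟨p.1.2, hα⟩
      show ((asel p.1.1)⁻¹ * p.1.2) (e p.1.1) = e p.1.1
      rw [MulAut.mul_apply, hα, ← hs]
      exact (asel p.1.1).symm_apply_apply _⟩
  have finj : Function.Injective f := by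
    intro p q h
    have h' := Subtype.ext_iff.mp h
    have h1 : p.1.1 = q.1.1 := einj (congrArg Prod.fst h')
    have h2 : (asel p.1.1)⁻¹ * p.1.2 = (asel q.1.1)⁻¹ * q.1.2 := congrArg Prod.snd h'
    rw [h1] at h2
    exact Subtype.ext (Prod.ext h1 (mul_left_cancel h2))
  have hab : Nat.card ↥(autPairs H K hHK g) ≤ Nat.card ↥(autPairs K K le_rfl (1 : G)) :=
    Nat.card_le_card_of_injective f finj
  have hiff : Nat.card ↥(autPairs H K hHK g) = Nat.card ↥(autPairs K K le_rfl (1 : G)) ↔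
      (g = 1 ∧ H = K) := by
    constructor
    · intro hc
      have hbij : Function.Bijective f := (Nat.bijective_iff_injective_and_card f).mpr ⟨finj, hc⟩
      constructor
      · obtain ⟨p, hp⟩ := hbij.2 ⟨((1 : ↥K), (1 : MulAut ↥K)), (memK _).mpr rfl⟩
        have h' := Subtype.ext_iff.mp hp
        have h1 : e p.1.1 = 1 := congrArg Prod.fst h'
        have hm := (memH p.1).mp p.2
        rw [h1, map_one, one_mul] at hm
        have := congrArg Subtype.val hm
        simpa [hghat] using this.symm
      · refine le_antisymm hHK ?_
        intro y hy
        obtain ⟨p, hp⟩ := hbij.2 ⟨((⟨y, hy⟩ : ↥K), (1 : MulAut ↥K)), (memK _).mpr rfl⟩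
        have h' := Subtype.ext_iff.mp hp
        have h1 : e p.1.1 = ⟨y, hy⟩ := congrArg Prod.fst h'
        have h2 : (p.1.1 : G) = y := congrArg Subtype.val h1
        rw [← h2]
        exact p.1.1.2
    · rintro ⟨h1, h2⟩
      exact hback h1 h2
  -- arithmetic
  have hH0 : (0 : ℚ) < (Nat.card ↥H : ℚ) := by exact_mod_cast Nat.card_pos
  have hK0 : (0 : ℚ) < (Nat.card ↥K : ℚ) := by exact_mod_cast Nat.card_pos
  have hm0 : (0 : ℚ) < (Nat.card (MulAut ↥K) : ℚ) := by exact_mod_cast Nat.card_pos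
  have hrel : Nat.card ↥H * H.relIndex K = Nat.card ↥K := by
    have h1 : Nat.card ↥(H.subgroupOf K) = Nat.card ↥H :=
      Nat.card_congr (Subgroup.subgroupOfEquivOfLe hHK).toEquiv
    rw [← h1]
    exact Subgroup.card_mul_index (H.subgroupOf K)
  have hrelQ : (Nat.card ↥H : ℚ) * (H.relIndex K : ℚ) = (Nat.card ↥K : ℚ) := by
    exact_mod_cast hrel
  have hr0 : (0 : ℚ) < (H.relIndex K : ℚ) := by
    have h1 : 0 < H.relIndex K := by
      rcases Nat.eq_zero_or_pos (H.relIndex K) with h0 | h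
      · rw [h0, mul_zero] at hrel
        have := Nat.card_pos (α := ↥K)
        omega
      · exact h
    exact_mod_cast h1
  have hRHS : (H.relIndex K : ℚ) * prAut K K le_rfl 1
      = (Nat.card ↥(autPairs K K le_rfl (1 : G)) : ℚ) /
        ((Nat.card ↥H : ℚ) * (Nat.card (MulAut ↥K) : ℚ)) := by
    unfold prAut
    rw [← mul_div_assoc, div_eq_div_iff (by positivity) (by positivity)]
    linear_combination ((Nat.card ↥(autPairs K K le_rfl (1 : G)) : ℚ) *
      (Nat.card (MulAut ↥K) : ℚ)) * hrelQ
  have hden : (0 : ℚ) < (Nat.card ↥H : ℚ) * (Nat.card (MulAut ↥K) : ℚ) := by positivity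
  have hL : prAut H K hHK g
      = (Nat.card ↥(autPairs H K hHK g) : ℚ) /
        ((Nat.card ↥H : ℚ) * (Nat.card (MulAut ↥K) : ℚ)) := rfl
  constructor
  · rw [hL, hRHS, div_le_div_iff_of_pos_right hden]
    exact_mod_cast hab
  · rw [hL, hRHS, div_left_inj' (ne_of_gt hden), ← hiff]
    exact_mod_cast Iff.rfl
end

section
/- Let G be a finite group and H ⊆ K subgroups of G. Then Pr(H,Aut(K)) ≤ Pr(H,K), where Pr(H,K) := |{(x,y) ∈ H × K : xy = yx}| / (|H|·|K|) is the relative commuting probability. -/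
open scoped Pointwise Classical

lemma my_card_pair_sum {α β : Type*} [Fintype α] [Finite β] (P : α → β → Prop) :
    Nat.card {p : α × β // P p.1 p.2} = ∑ x : α, Nat.card {y : β // P x y} := by
  classical
  cases nonempty_fintype β
  rw [Nat.card_eq_fintype_card,
    Fintype.card_congr (Equiv.subtypeProdEquivSigmaSubtype P), Fintype.card_sigma]
  simp [Nat.card_eq_fintype_card]

lemma my_orbit_stab {M : Type*} [Group M] {β : Type*} [MulAction M β] (b : β) :
    Nat.card (MulAction.orbit M b) * Nat.card (MulAction.stabilizer M b) = Nat.card M := by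
  rw [← Nat.card_prod]
  exact Nat.card_congr (MulAction.orbitProdStabilizerEquivGroup M b)

lemma my_key {G : Type*} [Group G] [Fintype G] (K : Subgroup G) (x : ↥K) :
    Nat.card (MulAction.stabilizer (MulAut ↥K) x) * Nat.card ↥K ≤
      Nat.card (MulAut ↥K) * Nat.card (MulAction.stabilizer (ConjAct ↥K) x) := by
  have h1 := my_orbit_stab (M := MulAut ↥K) x
  have h2 := my_orbit_stab (M := ConjAct ↥K) x
  have hK : Nat.card (ConjAct ↥K) = Nat.card ↥K := rfl
  have hsub : MulAction.orbit (ConjAct ↥K) x ⊆ MulAction.orbit (MulAut ↥K) x := by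
    rintro _ ⟨c, rfl⟩
    exact ⟨MulAut.conj (ConjAct.ofConjAct c), by
      simp [ConjAct.smul_def, MulAut.conj_apply, MulAut.smul_def]⟩
  have hle : Nat.card (MulAction.orbit (ConjAct ↥K) x) ≤
      Nat.card (MulAction.orbit (MulAut ↥K) x) :=
    Nat.card_mono (Set.toFinite _) hsub
  calc Nat.card (MulAction.stabilizer (MulAut ↥K) x) * Nat.card ↥K
      = Nat.card (MulAction.stabilizer (MulAut ↥K) x) *
        (Nat.card (MulAction.orbit (ConjAct ↥K) x) *
          Nat.card (MulAction.stabilizer (ConjAct ↥K) x)) := by rw [h2, hK]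
    _ ≤ Nat.card (MulAction.stabilizer (MulAut ↥K) x) *
        (Nat.card (MulAction.orbit (MulAut ↥K) x) *
          Nat.card (MulAction.stabilizer (ConjAct ↥K) x)) := by
        exact Nat.mul_le_mul_left _ (Nat.mul_le_mul_right _ hle)
    _ = (Nat.card (MulAction.orbit (MulAut ↥K) x) *
          Nat.card (MulAction.stabilizer (MulAut ↥K) x)) *
          Nat.card (MulAction.stabilizer (ConjAct ↥K) x) := by ring
    _ = Nat.card (MulAut ↥K) * Nat.card (MulAction.stabilizer (ConjAct ↥K) x) := by rw [h1]


/-- `Pr(H,Aut(K)) ≤ Pr(H,K)`, the relative commuting probability. -/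
theorem stmt_13 {G : Type*} [Group G] [Fintype G] (H K : Subgroup G) (hHK : H ≤ K) :
    prAut H K hHK 1 ≤
      (Nat.card {p : ↥H × ↥K | (p.1 : G) * (p.2 : G) = (p.2 : G) * (p.1 : G)} : ℚ) /
        ((Nat.card ↥H : ℚ) * (Nat.card ↥K : ℚ)) := by
  classical
  have em : ↥H → ↥K := fun x => ⟨(x : G), hHK x.2⟩
  -- cardinality of autPairs as a sum of stabilizer cards
  have hcA : Nat.card (autPairs H K hHK 1) =
      ∑ x : ↥H, Nat.card (MulAction.stabilizer (MulAut ↥K) (⟨(x : G), hHK x.2⟩ : ↥K)) := by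
    have h1 : Nat.card (autPairs H K hHK 1) =
        Nat.card {p : ↥H × MulAut ↥K //
          p.2 (⟨(p.1 : G), hHK p.1.2⟩ : ↥K) = ⟨(p.1 : G), hHK p.1.2⟩} := by
      apply Nat.card_congr
      apply Equiv.subtypeEquivRight
      intro p
      simp only [autPairs, Set.mem_setOf_eq, inv_mul_eq_one]
      rw [Subtype.ext_iff]
      exact eq_comm
    rw [h1, my_card_pair_sum (fun (x : ↥H) (α : MulAut ↥K) =>
      α (⟨(x : G), hHK x.2⟩ : ↥K) = ⟨(x : G), hHK x.2⟩)]
    refine Finset.sum_congr rfl fun x _ => ?_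
    apply Nat.card_congr
    apply Equiv.subtypeEquivRight
    intro α
    simp [MulAction.mem_stabilizer_iff, MulAut.smul_def]
  have hcC : Nat.card {p : ↥H × ↥K | (p.1 : G) * (p.2 : G) = (p.2 : G) * (p.1 : G)} =
      ∑ x : ↥H, Nat.card (MulAction.stabilizer (ConjAct ↥K) (⟨(x : G), hHK x.2⟩ : ↥K)) := by
    rw [show {p : ↥H × ↥K | (p.1 : G) * (p.2 : G) = (p.2 : G) * (p.1 : G)} =
        {p : ↥H × ↥K | ((p.1 : G) * (p.2 : G) = (p.2 : G) * (p.1 : G))} from rfl]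
    have h1 : Nat.card {p : ↥H × ↥K //
        (p.1 : G) * (p.2 : G) = (p.2 : G) * (p.1 : G)} =
        ∑ x : ↥H, Nat.card {y : ↥K // (x : G) * (y : G) = (y : G) * (x : G)} :=
      my_card_pair_sum (fun (x : ↥H) (y : ↥K) => (x : G) * (y : G) = (y : G) * (x : G))
    rw [show Nat.card {p : ↥H × ↥K | (p.1 : G) * (p.2 : G) = (p.2 : G) * (p.1 : G)} =
        Nat.card {p : ↥H × ↥K // (p.1 : G) * (p.2 : G) = (p.2 : G) * (p.1 : G)} from rfl, h1]
    refine Finset.sum_congr rfl fun x _ => ?_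
    apply Nat.card_congr
    refine (ConjAct.toConjAct (G := ↥K)).toEquiv.subtypeEquiv fun y => ?_
    simp only [MulAction.mem_stabilizer_iff, ConjAct.smul_def, ConjAct.ofConjAct_toConjAct,
      MulEquiv.coe_toEquiv]
    rw [mul_inv_eq_iff_eq_mul, Subtype.ext_iff]
    push_cast
    exact eq_comm
  -- positivity
  have hH : (0 : ℚ) < Nat.card ↥H := by exact_mod_cast Nat.card_pos
  have hK : (0 : ℚ) < Nat.card ↥K := by exact_mod_cast Nat.card_pos
  have hA : (0 : ℚ) < Nat.card (MulAut ↥K) := by exact_mod_cast Nat.card_pos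
  rw [prAut, div_le_div_iff₀ (by positivity) (by positivity)]
  have hsum : (∑ x : ↥H, Nat.card (MulAction.stabilizer (MulAut ↥K)
        (⟨(x : G), hHK x.2⟩ : ↥K))) * Nat.card ↥K ≤
      (∑ x : ↥H, Nat.card (MulAction.stabilizer (ConjAct ↥K)
        (⟨(x : G), hHK x.2⟩ : ↥K))) * Nat.card (MulAut ↥K) := by
    rw [Finset.sum_mul, Finset.sum_mul]
    refine Finset.sum_le_sum fun x _ => ?_
    have := my_key K (⟨(x : G), hHK x.2⟩ : ↥K)
    exact this.trans_eq (Nat.mul_comm _ _)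
  rw [hcA, hcC]
  have : ((∑ x : ↥H, Nat.card (MulAction.stabilizer (MulAut ↥K)
        (⟨(x : G), hHK x.2⟩ : ↥K)) : ℕ) : ℚ) * Nat.card ↥K ≤
      ((∑ x : ↥H, Nat.card (MulAction.stabilizer (ConjAct ↥K)
        (⟨(x : G), hHK x.2⟩ : ↥K)) : ℕ) : ℚ) * Nat.card (MulAut ↥K) := by
    exact_mod_cast hsum
  calc (↑(∑ x : ↥H, Nat.card (MulAction.stabilizer (MulAut ↥K) (⟨(x : G), hHK x.2⟩ : ↥K))) : ℚ) *
        ((Nat.card ↥H : ℚ) * (Nat.card ↥K : ℚ))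
      = ((↑(∑ x : ↥H, Nat.card (MulAction.stabilizer (MulAut ↥K) (⟨(x : G), hHK x.2⟩ : ↥K))) : ℚ) *
        (Nat.card ↥K : ℚ)) * (Nat.card ↥H : ℚ) := by ring
    _ ≤ ((↑(∑ x : ↥H, Nat.card (MulAction.stabilizer (ConjAct ↥K) (⟨(x : G), hHK x.2⟩ : ↥K))) : ℚ) *
        (Nat.card (MulAut ↥K) : ℚ)) * (Nat.card ↥H : ℚ) :=
        mul_le_mul_of_nonneg_right this (le_of_lt hH)
    _ = (↑(∑ x : ↥H, Nat.card (MulAction.stabilizer (ConjAct ↥K) (⟨(x : G), hHK x.2⟩ : ↥K))) : ℚ) *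
        ((Nat.card ↥H : ℚ) * (Nat.card (MulAut ↥K) : ℚ)) := by ring
end

section
/- Let G be a finite group, H ⊆ K subgroups of G with H ≠ L(H,Aut(K)), let p be the smallest prime dividing |Aut(K)|, and set X_H := {x ∈ H : C_{Aut(K)}(x) = {id}}. Then Pr(H,Aut(K)) ≥ |L(H,Aut(K))|/|H| + (p·(|H| − |X_H| − |L(H,Aut(K))|) + |X_H|)/(|H|·|Aut(K)|), and Pr(H,Aut(K)) ≤ ((p − 1)·|L(H,Aut(K))| + |H|)/(p·|H|) − |X_H|·(|Aut(K)| − p)/(p·|H|·|Aut(K)|). -/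
open scoped Pointwise Classical

/-- Lower and upper bounds for `Pr(H,Aut(K))` in terms of the smallest prime `p` dividing
`|Aut(K)|` and `X_H = {x ∈ H : C_{Aut(K)}(x) = {id}}`. -/
theorem stmt_14 {G : Type*} [Group G] [Fintype G] (H K : Subgroup G) (hHK : H ≤ K)
    (hne : absCent H K hHK ≠ ⊤)
    (p : ℕ) (hp : p.Prime) (hpdvd : p ∣ Nat.card (MulAut ↥K))
    (hpmin : ∀ r : ℕ, r.Prime → r ∣ Nat.card (MulAut ↥K) → p ≤ r)
    (XH : Set ↥H) (hXH : XH = {x : ↥H | centAut K ⟨(x : G), hHK x.2⟩ = {1}}) :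
    prAut H K hHK 1 ≥
        (Nat.card (absCent H K hHK) : ℚ) / (Nat.card ↥H : ℚ) +
          ((p : ℚ) * ((Nat.card ↥H : ℚ) - (Nat.card XH : ℚ) -
                (Nat.card (absCent H K hHK) : ℚ)) + (Nat.card XH : ℚ)) /
            ((Nat.card ↥H : ℚ) * (Nat.card (MulAut ↥K) : ℚ)) ∧
      prAut H K hHK 1 ≤
        (((p : ℚ) - 1) * (Nat.card (absCent H K hHK) : ℚ) + (Nat.card ↥H : ℚ)) /
            ((p : ℚ) * (Nat.card ↥H : ℚ)) -
          (Nat.card XH : ℚ) * ((Nat.card (MulAut ↥K) : ℚ) - (p : ℚ)) /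
            ((p : ℚ) * (Nat.card ↥H : ℚ) * (Nat.card (MulAut ↥K) : ℚ))  := by
  classical
  haveI : Fintype (MulAut ↥K) := Fintype.ofFinite _
  set A := MulAut ↥K with hA
  set n := Nat.card A with hn
  set h := Nat.card ↥H with hh
  have hn0 : n ≠ 0 := Nat.card_pos.ne'
  have hh0 : h ≠ 0 := Nat.card_pos.ne'
  -- number-theoretic lemmas about the smallest prime divisor
  have lemA : ∀ d : ℕ, d ∣ n → d ≠ 1 → p ≤ d := by
    intro d hd h1
    have hd0 : d ≠ 0 := by rintro rfl; exact hn0 (Nat.zero_dvd.mp hd)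
    exact le_trans (hpmin _ (Nat.minFac_prime h1) ((Nat.minFac_dvd d).trans hd))
      (Nat.minFac_le (Nat.pos_of_ne_zero hd0))
  have lemB : ∀ d : ℕ, d ∣ n → d ≠ n → p * d ≤ n := by
    intro d hd hdn
    obtain ⟨e, he⟩ := hd
    have he1 : e ≠ 1 := by rintro rfl; simp at he; exact hdn he.symm
    have hpe : p ≤ e := lemA e (Dvd.intro_left d he.symm) he1
    calc p * d ≤ e * d := Nat.mul_le_mul_right d hpe
      _ = n := by rw [he]; ring
  let em : ↥H → ↥K := fun x => ⟨(x : G), hHK x.2⟩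
  let f : ↥H → ℕ := fun x => Nat.card (MulAction.stabilizer A (em x))
  have hfx : ∀ x : ↥H, f x = Nat.card (MulAction.stabilizer A (em x)) := fun _ => rfl
  have hcentstab : ∀ y : ↥K, centAut K y = ↑(MulAction.stabilizer A y) := fun y => rfl
  have hN : Nat.card (autPairs H K hHK 1) = ∑ x : ↥H, f x := by
    have hset : autPairs H K hHK 1 = {q : ↥H × A | q.2 (em q.1) = em q.1} := by
      ext q
      simp only [autPairs, Set.mem_setOf_eq, inv_mul_eq_one, Subtype.ext_iff]
      exact comm
    rw [hset]
    calc Nat.card ↥{q : ↥H × A | q.2 (em q.1) = em q.1}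
        = Nat.card ((x : ↥H) × {α : A // α (em x) = em x}) :=
          Nat.card_congr (Equiv.subtypeProdEquivSigmaSubtype
            (fun (x : ↥H) (α : A) => α (em x) = em x))
      _ = ∑ x : ↥H, Nat.card {α : A // α (em x) = em x} := by
          simp [Nat.card_eq_fintype_card, Fintype.card_sigma]
      _ = ∑ x : ↥H, f x := rfl
  -- per-element facts
  have hfd : ∀ x : ↥H, f x ∣ n := by
    intro x; rw [hfx x]; exact Subgroup.card_subgroup_dvd_card _
  have hLmem : ∀ x : ↥H, x ∈ absCent H K hHK ↔ f x = n := by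
    intro x
    constructor
    · intro hx
      have htop : MulAction.stabilizer A (em x) = ⊤ := by
        ext α
        simp only [MulAction.mem_stabilizer_iff, MulAut.smul_def, Subgroup.mem_top, iff_true]
        exact hx α
      rw [hfx x, htop, hn]
      exact Nat.card_congr Subgroup.topEquiv.toEquiv
    · intro hx
      have htop : MulAction.stabilizer A (em x) = ⊤ := by
        apply Subgroup.eq_top_of_card_eq
        rw [← hfx x, hx, hn]
      intro α
      have hmem : α ∈ MulAction.stabilizer A (em x) := htop ▸ Subgroup.mem_top α
      exact hmem
  have hXmem : ∀ x : ↥H, x ∈ XH ↔ f x = 1 := by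
    intro x
    rw [hXH, Set.mem_setOf_eq, hcentstab, hfx x, Subgroup.card_eq_one]
    constructor
    · intro hb
      apply SetLike.coe_injective
      rw [hb, Subgroup.coe_bot]
    · intro hb
      rw [hb, Subgroup.coe_bot]
  -- the three pieces of H
  set Lset : Finset ↥H := Finset.univ.filter (· ∈ absCent H K hHK) with hLset
  set Xset : Finset ↥H := Finset.univ.filter (· ∈ XH) with hXset
  set Rset : Finset ↥H := Finset.univ \ (Lset ∪ Xset) with hRset
  have hdisj : Disjoint Lset Xset := by
    rw [Finset.disjoint_left]
    intro x hxL hxX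
    have h1 : f x = n := (hLmem x).mp (by simpa [hLset] using hxL)
    have h2 : f x = 1 := (hXmem x).mp (by simpa [hXset] using hxX)
    have hn1 : n = 1 := by rw [← h1, h2]
    exact hp.one_lt.ne' (Nat.dvd_one.mp (hn1 ▸ hpdvd))
  have hLcard : Lset.card = Nat.card (absCent H K hHK) := by
    rw [Nat.card_eq_fintype_card, Fintype.card_subtype, hLset]
  have hXcard : Xset.card = Nat.card XH := by
    rw [Nat.card_eq_fintype_card, Fintype.card_subtype, hXset]
  have hcards : Lset.card + Xset.card + Rset.card = h := by
    have h1 : (Lset ∪ Xset).card = Lset.card + Xset.card := Finset.card_union_of_disjoint hdisj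
    have h2 : Rset.card = (Finset.univ : Finset ↥H).card - (Lset ∪ Xset).card := by
      rw [hRset, Finset.card_sdiff_of_subset (Finset.subset_univ _)]
    have h3 : (Lset ∪ Xset).card ≤ (Finset.univ : Finset ↥H).card :=
      Finset.card_le_card (Finset.subset_univ _)
    have h4 : h = (Finset.univ : Finset ↥H).card := by
      rw [hh, Nat.card_eq_fintype_card, Finset.card_univ]
    omega
  have hsplit : ∑ x : ↥H, f x = ∑ x ∈ Lset, f x + ∑ x ∈ Xset, f x + ∑ x ∈ Rset, f x := by
    have h1 : ∑ x ∈ Rset, f x + ∑ x ∈ Lset ∪ Xset, f x = ∑ x : ↥H, f x := by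
      rw [hRset]; exact Finset.sum_sdiff (Finset.subset_univ _)
    rw [← h1, Finset.sum_union hdisj]; ring
  have hLsum : ∑ x ∈ Lset, f x = Lset.card * n := by
    rw [Finset.sum_congr rfl (fun x hx => (hLmem x).mp (by simpa [hLset] using hx))]
    simp [mul_comm]
  have hXsum : ∑ x ∈ Xset, f x = Xset.card := by
    rw [Finset.sum_congr rfl (fun x hx => (hXmem x).mp (by simpa [hXset] using hx))]
    simp
  have hRlb : Rset.card * p ≤ ∑ x ∈ Rset, f x := by
    have hub : ∀ x ∈ Rset, p ≤ f x := by
      intro x hx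
      simp only [hRset, Finset.mem_sdiff, Finset.mem_union, hLset, hXset,
        Finset.mem_filter, Finset.mem_univ, true_and, not_or] at hx
      exact lemA (f x) (hfd x) (fun hfeq => hx.2 ((hXmem x).mpr hfeq))
    calc Rset.card * p = ∑ _x ∈ Rset, p := by rw [Finset.sum_const, smul_eq_mul]
      _ ≤ ∑ x ∈ Rset, f x := Finset.sum_le_sum hub
  have hRub : p * ∑ x ∈ Rset, f x ≤ Rset.card * n := by
    have hub : ∀ x ∈ Rset, p * f x ≤ n := by
      intro x hx
      simp only [hRset, Finset.mem_sdiff, Finset.mem_union, hLset, hXset,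
        Finset.mem_filter, Finset.mem_univ, true_and, not_or] at hx
      exact lemB (f x) (hfd x) (fun hfeq => hx.1 ((hLmem x).mpr hfeq))
    calc p * ∑ x ∈ Rset, f x = ∑ x ∈ Rset, p * f x := Finset.mul_sum _ _ _
      _ ≤ ∑ _x ∈ Rset, n := Finset.sum_le_sum hub
      _ = Rset.card * n := by rw [Finset.sum_const, smul_eq_mul]
  -- pass to the rationals
  set N := Nat.card (autPairs H K hHK 1) with hNdef
  set SR := ∑ x ∈ Rset, f x with hSRdef
  set Lc := Nat.card (absCent H K hHK) with hLc
  set Xc := Nat.card XH with hXc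
  have hNval : N = Lc * n + Xc + SR := by
    rw [hN, hsplit, hLsum, hXsum, hLcard, hXcard]
  have hhq : (0:ℚ) < (h:ℚ) := by exact_mod_cast Nat.pos_of_ne_zero hh0
  have hnq : (0:ℚ) < (n:ℚ) := by exact_mod_cast Nat.pos_of_ne_zero hn0
  have hpq : (0:ℚ) < (p:ℚ) := by exact_mod_cast hp.pos
  have hRq : (Rset.card : ℚ) = (h : ℚ) - Lc - Xc := by
    have hc := hcards
    rw [hLcard, hXcard] at hc
    push_cast [← hc]
    ring
  have hNq : (N:ℚ) = (Lc:ℚ) * n + Xc + SR := by exact_mod_cast hNval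
  have h1' : ((h:ℚ) - Lc - Xc) * p ≤ (SR:ℚ) := by
    rw [← hRq]; exact_mod_cast hRlb
  have h3' : (p:ℚ) * SR ≤ ((h:ℚ) - Lc - Xc) * n := by
    rw [← hRq]; exact_mod_cast hRub
  have key1 : (Lc:ℚ) * n + ((p:ℚ) * ((h:ℚ) - Xc - Lc) + Xc) ≤ (N:ℚ) := by
    nlinarith [h1', hNq]
  have key2 : (p:ℚ) * N ≤ ((p:ℚ) - 1) * Lc * n + (h:ℚ) * n - (Xc:ℚ) * ((n:ℚ) - p) := by
    have h4 : (p:ℚ) * N = (p:ℚ) * Lc * n + p * Xc + p * SR := by rw [hNq]; ring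
    nlinarith [h3', h4]
  have hpr : prAut H K hHK 1 = (N:ℚ) / ((h:ℚ) * (n:ℚ)) := rfl
  clear_value n h N SR Lc Xc
  constructor
  · rw [ge_iff_le, hpr]
    have e1 : (Lc:ℚ) / h + ((p:ℚ) * ((h:ℚ) - Xc - Lc) + Xc) / ((h:ℚ) * n)
        = ((Lc:ℚ) * n + ((p:ℚ) * ((h:ℚ) - Xc - Lc) + Xc)) / ((h:ℚ) * n) := by
      field_simp
    rw [e1]
    gcongr
  · rw [hpr]
    have e2 : (((p:ℚ) - 1) * Lc + h) / ((p:ℚ) * h) - (Xc:ℚ) * ((n:ℚ) - p) / ((p:ℚ) * h * n)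
        = (((p:ℚ) - 1) * Lc * n + (h:ℚ) * n - (Xc:ℚ) * ((n:ℚ) - p)) / ((p:ℚ) * h * n) := by
      field_simp
    rw [e2, div_le_div_iff₀ (mul_pos hhq hnq) (by positivity)]
    have key2' := mul_le_mul_of_nonneg_right key2 (le_of_lt (mul_pos hhq hnq))
    linarith [key2']
end

section
/- Let G be a finite group and H ⊆ K subgroups of G with H ≠ L(H,Aut(K)). If p is the smallest prime dividing |Aut(K)| and q is the smallest prime dividing |H|, then Pr(H,Aut(K)) ≤ (p + q − 1)/(pq). In particular, if p = q then Pr(H,Aut(K)) ≤ (2p − 1)/p² ≤ 3/4. -/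
open scoped Pointwise Classical

/-- If `S` is a proper subgroup of a finite group `A` and `p` is at most every prime
dividing `|A|`, then `p * |S| ≤ |A|`. -/
lemma key_index {A : Type*} [Group A] [Finite A] (S : Subgroup A) (hS : S ≠ ⊤)
    (p : ℕ) (hpmin : ∀ r : ℕ, r.Prime → r ∣ Nat.card A → p ≤ r) :
    p * Nat.card S ≤ Nat.card A := by
  have hmul := S.card_mul_index
  have hdvd := S.index_dvd_card
  have hne1 : S.index ≠ 1 := fun h => hS (Subgroup.index_eq_one.mp h)
  have hpos : 0 < S.index := Nat.pos_of_ne_zero S.index_ne_zero_of_finite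
  have hprime := Nat.minFac_prime hne1
  have h1 : p ≤ S.index.minFac := hpmin _ hprime ((Nat.minFac_dvd _).trans hdvd)
  have h2 : S.index.minFac ≤ S.index := Nat.minFac_le hpos
  calc p * Nat.card S ≤ S.index * Nat.card S :=
        Nat.mul_le_mul_right _ (h1.trans h2)
    _ = Nat.card A := by rw [mul_comm]; exact hmul

/-- If `p`, `q` are the smallest primes dividing `|Aut(K)|` and `|H|` respectively, then
`Pr(H,Aut(K)) ≤ (p+q-1)/(pq)`; in particular if `p = q` then
`Pr(H,Aut(K)) ≤ (2p-1)/p² ≤ 3/4`. -/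
theorem stmt_15 {G : Type*} [Group G] [Fintype G] (H K : Subgroup G) (hHK : H ≤ K)
    (hne : absCent H K hHK ≠ ⊤)
    (p : ℕ) (hp : p.Prime) (hpdvd : p ∣ Nat.card (MulAut ↥K))
    (hpmin : ∀ r : ℕ, r.Prime → r ∣ Nat.card (MulAut ↥K) → p ≤ r)
    (q : ℕ) (hq : q.Prime) (hqdvd : q ∣ Nat.card ↥H)
    (hqmin : ∀ r : ℕ, r.Prime → r ∣ Nat.card ↥H → q ≤ r) :
    prAut H K hHK 1 ≤ ((p : ℚ) + (q : ℚ) - 1) / ((p : ℚ) * (q : ℚ)) ∧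
      (p = q →
        prAut H K hHK 1 ≤ (2 * (p : ℚ) - 1) / ((p : ℚ) ^ 2) ∧
          (2 * (p : ℚ) - 1) / ((p : ℚ) ^ 2) ≤ 3 / 4) := by
  classical
  haveI : Fintype (MulAut ↥K) := Fintype.ofFinite _
  set nA := Nat.card (MulAut ↥K) with hnA
  set nH := Nat.card ↥H with hnH
  set nL := Nat.card (absCent H K hHK) with hnL
  set N := Nat.card (autPairs H K hHK (1 : G)) with hN
  let emb : ↥H → ↥K := fun x => ⟨(x : G), hHK x.2⟩
  let stab : ↥H → Subgroup (MulAut ↥K) := fun x => MulAction.stabilizer (MulAut ↥K) (emb x)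
  obtain ⟨p₁, rfl⟩ : ∃ a, p = a + 1 := ⟨p - 1, by have := hp.one_le; omega⟩
  -- counting
  have hcard : N = ∑ x : ↥H, Nat.card (stab x) := by
    have hset : autPairs H K hHK (1 : G)
        = {pa : ↥H × MulAut ↥K | pa.2 (emb pa.1) = emb pa.1} := by
      ext ⟨x, α⟩
      simp only [autPairs, Set.mem_setOf_eq, inv_mul_eq_one]
      constructor
      · intro h; exact Subtype.ext h.symm
      · intro h; rw [h]
    rw [hN, hset]
    have e1 : ↑{pa : ↥H × MulAut ↥K | pa.2 (emb pa.1) = emb pa.1}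
        ≃ Σ x : ↥H, {α : MulAut ↥K // α (emb x) = emb x} :=
      Equiv.subtypeProdEquivSigmaSubtype
        (fun (x : ↥H) (α : MulAut ↥K) => α (emb x) = emb x)
    calc Nat.card ↑{pa : ↥H × MulAut ↥K | pa.2 (emb pa.1) = emb pa.1}
        = Nat.card (Σ x : ↥H, {α : MulAut ↥K // α (emb x) = emb x}) := Nat.card_congr e1
      _ = ∑ x : ↥H, Nat.card ↥(stab x) := by
          rw [Nat.card_eq_fintype_card, Fintype.card_sigma]
          refine Finset.sum_congr rfl fun x _ => ?_
          rw [← Nat.card_eq_fintype_card]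
          exact Nat.card_congr (Equiv.subtypeEquivRight fun α => Iff.rfl)
  have hApos : 0 < nA := Nat.card_pos
  have hHpos : 0 < nH := Nat.card_pos
  have hstab_le : ∀ x : ↥H, Nat.card (stab x) ≤ nA := by
    intro x
    exact Nat.le_of_dvd hApos (Subgroup.card_subgroup_dvd_card _)
  have hstab_lt : ∀ x : ↥H, x ∉ absCent H K hHK →
      (p₁ + 1) * Nat.card (stab x) ≤ nA := by
    intro x hx
    refine key_index _ (fun htop => hx fun α => ?_) _ hpmin
    have hmem : α ∈ stab x := by rw [htop]; trivial
    exact hmem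
  have hL : q * nL ≤ nH := key_index _ hne q hqmin
  have hpt : ∀ x : ↥H, (p₁ + 1) * Nat.card (stab x)
      ≤ nA + p₁ * nA * (if x ∈ absCent H K hHK then 1 else 0) := by
    intro x
    by_cases hx : x ∈ absCent H K hHK
    · simp only [hx, if_pos, mul_one]
      calc (p₁ + 1) * Nat.card (stab x) ≤ (p₁ + 1) * nA :=
            Nat.mul_le_mul_left _ (hstab_le x)
        _ = nA + p₁ * nA := by ring
    · simpa [hx] using hstab_lt x hx
  have hsum : (p₁ + 1) * N ≤ nH * nA + p₁ * nA * nL := by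
    rw [hcard, Finset.mul_sum]
    calc ∑ x : ↥H, (p₁ + 1) * Nat.card (stab x)
        ≤ ∑ x : ↥H, (nA + p₁ * nA * (if x ∈ absCent H K hHK then 1 else 0)) :=
          Finset.sum_le_sum fun x _ => hpt x
      _ = nH * nA + p₁ * nA * nL := by
          rw [Finset.sum_add_distrib, Finset.sum_const, ← Finset.mul_sum]
          have h1 : (∑ x : ↥H, (if x ∈ absCent H K hHK then 1 else 0)) = nL := by
            rw [Finset.sum_boole, Nat.cast_id, hnL, Nat.card_eq_fintype_card,
              Fintype.card_subtype]
          rw [h1, smul_eq_mul, Finset.card_univ, hnH, Nat.card_eq_fintype_card]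
  have hmain : (p₁ + 1) * q * N ≤ (p₁ + q) * (nH * nA) := by
    have h2 : q * ((p₁ + 1) * N) ≤ q * (nH * nA + p₁ * nA * nL) :=
      Nat.mul_le_mul_left _ hsum
    have h3 : p₁ * nA * (q * nL) ≤ p₁ * nA * nH := Nat.mul_le_mul_left _ hL
    nlinarith [h2, h3]
  have hq2 : (2 : ℚ) ≤ (q : ℚ) := by exact_mod_cast hq.two_le
  have hp2 : (2 : ℚ) ≤ ((p₁ + 1 : ℕ) : ℚ) := by exact_mod_cast hp.two_le
  have hcast : ((p₁ + 1 : ℕ) : ℚ) * (q : ℚ) * (N : ℚ)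
      ≤ ((p₁ : ℚ) + (q : ℚ)) * ((nH : ℚ) * (nA : ℚ)) := by
    exact_mod_cast hmain
  have hfirst : prAut H K hHK 1 ≤ (((p₁ + 1 : ℕ) : ℚ) + (q : ℚ) - 1)
      / (((p₁ + 1 : ℕ) : ℚ) * (q : ℚ)) := by
    rw [prAut]
    rw [div_le_div_iff₀ (by positivity) (by positivity)]
    push_cast at hcast ⊢
    nlinarith [hcast]
  refine ⟨hfirst, fun hpq => ?_⟩
  subst hpq
  constructor
  · have heq : (((p₁ + 1 : ℕ) : ℚ) + ((p₁ + 1 : ℕ) : ℚ) - 1)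
        / (((p₁ + 1 : ℕ) : ℚ) * ((p₁ + 1 : ℕ) : ℚ))
        = (2 * ((p₁ + 1 : ℕ) : ℚ) - 1) / (((p₁ + 1 : ℕ) : ℚ) ^ 2) := by
      rw [sq]; ring_nf
    rw [← heq]; exact hfirst
  · rw [div_le_div_iff₀ (by positivity) (by norm_num)]
    nlinarith [hp2]
end

section
/- Let G be a finite group and H ⊆ K subgroups of G with H non-abelian. If p is the smallest prime dividing |Aut(K)| and q is the smallest prime dividing |H|, then Pr(H,Aut(K)) ≤ (q² + p − 1)/(pq²). In particular, if p = q then Pr(H,Aut(K)) ≤ (p² + p − 1)/p³ ≤ 5/8. -/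
open scoped Pointwise Classical

section AuxProof

variable {G : Type*} [Group G]

lemma nat_card_sigma' {ι : Type*} [Fintype ι] (f : ι → Type*) [∀ i, Finite (f i)] :
    Nat.card (Σ i, f i) = ∑ i, Nat.card (f i) := by
  letI : ∀ i, Fintype (f i) := fun i => Fintype.ofFinite _
  simp [Nat.card_eq_fintype_card, Fintype.card_sigma]

lemma count_pairs' [Fintype G] (H K : Subgroup G) (hHK : H ≤ K) :
    Nat.card (autPairs H K hHK 1) =
      ∑ x : ↥H, Nat.card (MulAction.stabilizer (MulAut ↥K) (⟨(x : G), hHK x.2⟩ : ↥K)) := by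
  have e : ↥(autPairs H K hHK 1) ≃
      Σ x : ↥H, ↥(MulAction.stabilizer (MulAut ↥K) (⟨(x : G), hHK x.2⟩ : ↥K)) :=
    { toFun := fun pp => ⟨pp.1.1, pp.1.2, by
        have hp := pp.2
        simp only [autPairs, Set.mem_setOf_eq, inv_mul_eq_one] at hp
        exact (Subtype.ext hp.symm :
          pp.1.2 ⟨(pp.1.1 : G), hHK pp.1.1.2⟩ = ⟨(pp.1.1 : G), hHK pp.1.1.2⟩)⟩
      invFun := fun s => ⟨(s.1, s.2.1), by
        have hs : s.2.1 • (⟨(s.1 : G), hHK s.1.2⟩ : ↥K) = ⟨(s.1 : G), hHK s.1.2⟩ := s.2.2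
        simp only [autPairs, Set.mem_setOf_eq, inv_mul_eq_one]
        exact congrArg Subtype.val hs.symm⟩
      left_inv := fun pp => rfl
      right_inv := fun s => rfl }
  rw [Nat.card_congr e, nat_card_sigma']

lemma stab_bound [Fintype G] (H K : Subgroup G) (hHK : H ≤ K)
    (p : ℕ) (hp : p.Prime) (hpmin : ∀ r : ℕ, r.Prime → r ∣ Nat.card (MulAut ↥K) → p ≤ r)
    (x : ↥H) (hx : x ∉ absCent H K hHK) :
    p * Nat.card (MulAction.stabilizer (MulAut ↥K) (⟨(x : G), hHK x.2⟩ : ↥K))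
      ≤ Nat.card (MulAut ↥K) := by
  set S := MulAction.stabilizer (MulAut ↥K) (⟨(x : G), hHK x.2⟩ : ↥K) with hS
  have hSne : S ≠ ⊤ := by
    intro htop
    apply hx
    rw [mem_absCent]
    intro α
    have : α ∈ S := htop ▸ Subgroup.mem_top α
    exact this
  have hidx1 : S.index ≠ 1 := fun h => hSne (Subgroup.index_eq_one.mp h)
  have hidx0 : S.index ≠ 0 := Subgroup.index_ne_zero_of_finite
  have hr : S.index.minFac.Prime := Nat.minFac_prime hidx1
  have hrdvd : S.index.minFac ∣ Nat.card (MulAut ↥K) :=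
    (Nat.minFac_dvd _).trans (Subgroup.index_dvd_card S)
  have hpr : p ≤ S.index.minFac := hpmin _ hr hrdvd
  have hple : p ≤ S.index := hpr.trans (Nat.minFac_le (Nat.pos_of_ne_zero hidx0))
  calc p * Nat.card S ≤ S.index * Nat.card S := Nat.mul_le_mul_right _ hple
    _ = Nat.card (MulAut ↥K) := by rw [mul_comm]; exact Subgroup.card_mul_index S

lemma absCent_le_center (H K : Subgroup G) (hHK : H ≤ K) :
    absCent H K hHK ≤ Subgroup.center ↥H := by
  intro x hx
  rw [Subgroup.mem_center_iff]
  intro h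
  have key := (mem_absCent.mp hx) (MulAut.conj (⟨(h : G), hHK h.2⟩ : ↥K))
  have keyG : (h : G) * (x : G) * (h : G)⁻¹ = (x : G) := congrArg Subtype.val key
  exact Subtype.ext (mul_inv_eq_iff_eq_mul.mp keyG)

lemma center_index_ge [Fintype G] (H : Subgroup G)
    (hnab : ¬ ∀ a b : ↥H, a * b = b * a)
    (q : ℕ) (hq : q.Prime) (hqmin : ∀ r : ℕ, r.Prime → r ∣ Nat.card ↥H → q ≤ r) :
    q ^ 2 ≤ (Subgroup.center ↥H).index := by
  set Z := Subgroup.center ↥H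
  set n := Z.index with hn
  have hn0 : n ≠ 0 := Subgroup.index_ne_zero_of_finite
  have hndvd : n ∣ Nat.card ↥H := Subgroup.index_dvd_card Z
  have hn1 : n ≠ 1 := by
    intro h1
    exact hnab (fun a b => by
      have : Z = ⊤ := Subgroup.index_eq_one.mp h1
      have ha : a ∈ Z := this ▸ Subgroup.mem_top a
      exact (Subgroup.mem_center_iff.mp ha b).symm)
  have hnp : ¬ n.Prime := by
    intro hprime
    haveI : Fact n.Prime := ⟨hprime⟩
    have hcard : Nat.card (↥H ⧸ Z) = n := rfl
    haveI : IsCyclic (↥H ⧸ Z) := isCyclic_of_prime_card hcard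
    exact hnab (commutative_of_cyclic_center_quotient (QuotientGroup.mk' Z)
      (le_of_eq (QuotientGroup.ker_mk' Z)))
  -- n is composite, all its prime factors are ≥ q
  set r := n.minFac with hr
  have hrp : r.Prime := Nat.minFac_prime hn1
  have hqr : q ≤ r := hqmin r hrp ((Nat.minFac_dvd n).trans hndvd)
  set m := n / r with hm
  have hmr : r * m = n := Nat.mul_div_cancel' (Nat.minFac_dvd n)
  have hm1 : m ≠ 1 := by
    intro h1
    rw [h1, mul_one] at hmr
    exact hnp (hmr ▸ hrp)
  have hm0 : m ≠ 0 := by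
    intro h0
    rw [h0, mul_zero] at hmr
    exact hn0 hmr.symm
  set s := m.minFac with hs
  have hsp : s.Prime := Nat.minFac_prime hm1
  have hsm : s ≤ m := Nat.minFac_le (Nat.pos_of_ne_zero hm0)
  have hqs : q ≤ s := hqmin s hsp (((Nat.minFac_dvd m).trans ⟨r, by rw [← hmr, mul_comm]⟩).trans hndvd)
  calc q ^ 2 = q * q := sq q
    _ ≤ r * m := Nat.mul_le_mul hqr (hqs.trans hsm)
    _ = n := hmr

end AuxProof

/-- If `H` is non-abelian and `p`, `q` are the smallest primes dividing `|Aut(K)|` and `|H|`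
respectively, then `Pr(H,Aut(K)) ≤ (q²+p-1)/(pq²)`; in particular if `p = q` then
`Pr(H,Aut(K)) ≤ (p²+p-1)/p³ ≤ 5/8`. -/
theorem stmt_16 {G : Type*} [Group G] [Fintype G] (H K : Subgroup G) (hHK : H ≤ K)
    (hnab : ¬ ∀ a b : ↥H, a * b = b * a)
    (p : ℕ) (hp : p.Prime) (hpdvd : p ∣ Nat.card (MulAut ↥K))
    (hpmin : ∀ r : ℕ, r.Prime → r ∣ Nat.card (MulAut ↥K) → p ≤ r)
    (q : ℕ) (hq : q.Prime) (hqdvd : q ∣ Nat.card ↥H)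
    (hqmin : ∀ r : ℕ, r.Prime → r ∣ Nat.card ↥H → q ≤ r) :
    prAut H K hHK 1 ≤ ((q : ℚ) ^ 2 + (p : ℚ) - 1) / ((p : ℚ) * (q : ℚ) ^ 2) ∧
      (p = q →
        prAut H K hHK 1 ≤ ((p : ℚ) ^ 2 + (p : ℚ) - 1) / ((p : ℚ) ^ 3) ∧
          ((p : ℚ) ^ 2 + (p : ℚ) - 1) / ((p : ℚ) ^ 3) ≤ 5 / 8) := by
  classical
  set L := absCent H K hHK with hLdef
  set A := Nat.card (MulAut ↥K) with hAdef
  set hh := Nat.card ↥H with hhdef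
  set l := Nat.card ↥L with hldef
  set N := Nat.card (autPairs H K hHK 1) with hNdef
  have hA0 : 0 < A := Nat.card_pos
  have hH0 : 0 < hh := Nat.card_pos
  have hlh : l ≤ hh := Subgroup.card_le_of_le le_top |>.trans (le_of_eq (by
    rw [hhdef]; exact Subgroup.card_top))
  -- key inequality 2 : q^2 * l ≤ hh
  have hql : q ^ 2 * l ≤ hh := by
    calc q ^ 2 * l ≤ q ^ 2 * Nat.card (Subgroup.center ↥H) :=
          Nat.mul_le_mul_left _ (Subgroup.card_le_of_le (absCent_le_center H K hHK))
      _ ≤ (Subgroup.center ↥H).index * Nat.card (Subgroup.center ↥H) :=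
          Nat.mul_le_mul_right _ (center_index_ge H hnab q hq hqmin)
      _ = hh := by rw [mul_comm, hhdef]; exact Subgroup.card_mul_index _
  -- key inequality 1 : p * N ≤ (p * l + (hh - l)) * A
  have hN : p * N ≤ (p * l + (hh - l)) * A := by
    rw [hNdef, count_pairs' H K hHK, Finset.mul_sum]
    have hterm : ∀ x : ↥H,
        p * Nat.card (MulAction.stabilizer (MulAut ↥K) (⟨(x : G), hHK x.2⟩ : ↥K))
          ≤ if x ∈ L then p * A else A := by
      intro x
      by_cases hx : x ∈ L
      · rw [if_pos hx]
        refine Nat.mul_le_mul_left _ ?_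
        rw [hAdef]
        exact (Subgroup.card_le_of_le le_top).trans (le_of_eq Subgroup.card_top)
      · rw [if_neg hx]
        exact stab_bound H K hHK p hp hpmin x hx
    refine le_trans (Finset.sum_le_sum fun x _ => hterm x) ?_
    rw [Finset.sum_ite, Finset.sum_const, Finset.sum_const, smul_eq_mul, smul_eq_mul]
    have ha : (Finset.univ.filter (fun x => x ∈ L)).card = l := by
      rw [hldef, Nat.card_eq_fintype_card, Fintype.card_subtype]
    have hab : (Finset.univ.filter (fun x => x ∈ L)).card
        + (Finset.univ.filter (fun x => ¬ x ∈ L)).card = hh := by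
      rw [Finset.card_filter_add_card_filter_not, hhdef,
        Nat.card_eq_fintype_card, Finset.card_univ]
    have hb : (Finset.univ.filter (fun x => ¬ x ∈ L)).card = hh - l := by omega
    rw [ha, hb]
    ring_nf
    omega
  -- pass to rationals
  have hA' : (0 : ℚ) < (A : ℚ) := by exact_mod_cast hA0
  have hH' : (0 : ℚ) < (hh : ℚ) := by exact_mod_cast hH0
  have hp2 : (2 : ℚ) ≤ (p : ℚ) := by exact_mod_cast hp.two_le
  have hq2 : (2 : ℚ) ≤ (q : ℚ) := by exact_mod_cast hq.two_le
  have hN' : (p : ℚ) * (N : ℚ) ≤ ((p : ℚ) * (l : ℚ) + ((hh : ℚ) - (l : ℚ))) * (A : ℚ) := by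
    have := hN
    have hcast : ((p * N : ℕ) : ℚ) ≤ (((p * l + (hh - l)) * A : ℕ) : ℚ) := by exact_mod_cast this
    rwa [Nat.cast_mul, Nat.cast_mul, Nat.cast_add, Nat.cast_mul, Nat.cast_sub hlh] at hcast
  have hql' : (q : ℚ) ^ 2 * (l : ℚ) ≤ (hh : ℚ) := by exact_mod_cast hql
  have hl0 : (0 : ℚ) ≤ (l : ℚ) := by positivity
  have hN0 : (0 : ℚ) ≤ (N : ℚ) := by positivity
  have main : prAut H K hHK 1 ≤ ((q : ℚ) ^ 2 + (p : ℚ) - 1) / ((p : ℚ) * (q : ℚ) ^ 2) := by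
    unfold prAut
    rw [div_le_div_iff₀ (by positivity) (by positivity)]
    have h1 := mul_le_mul_of_nonneg_right hN' (show (0 : ℚ) ≤ (q : ℚ) ^ 2 by positivity)
    have h2 := mul_le_mul_of_nonneg_left hql' (show (0 : ℚ) ≤ (p : ℚ) - 1 by linarith)
    have h3 := mul_le_mul_of_nonneg_right h2 hA'.le
    nlinarith [h1, h3, hA', hH', hN0, hl0]
  refine ⟨main, fun hpq => ?_⟩
  subst hpq
  constructor
  · have := main
    rwa [show ((p : ℚ) * (p : ℚ) ^ 2) = (p : ℚ) ^ 3 by ring] at this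
  · rw [div_le_div_iff₀ (by positivity) (by norm_num)]
    nlinarith [hp2, mul_nonneg (mul_nonneg (sub_nonneg.2 hp2) (sub_nonneg.2 hp2)) (sub_nonneg.2 hp2),
      sq_nonneg ((p : ℚ) - 2)]
end
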